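/- arXiv:2109.04642 — 6 statements merged into one kernel-verified Lean document; each statement's English description precedes it below -/
import Mathlib

section
/- Let β ∈ O_K satisfy O_K = O_F[β], and let χ_β(t) ∈ O_F[t] be the characteristic polynomial of β regarded as an element of M_n(O_F) via the regular representation. If e > 1, then the image of χ_β(t) in (O_F/𝔭_F^2)[t] is irreducible over O_F/𝔭_F^2; in particular it is not a product of two monic polynomials of positive degree with coefficients in O_F/𝔭_F^2. -/
/-!
STATEMENT 2: Let `β ∈ O_K` satisfy `O_K = O_F[β]`, and let `χ_β(t) ∈ O_F[t]` be the
characteristic polynomial of `β` via the regular representation. If `e > 1`, then the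
image of `χ_β(t)` in `(O_F/𝔭_F^2)[t]` is irreducible over `O_F/𝔭_F^2`; in particular it
is not a product of two monic polynomials of positive degree with coefficients in
`O_F/𝔭_F^2`.

Context: as in Statement 1; `e` is the ramification index of `K/F`.
-/

open IsLocalRing
open Polynomial in

theorem dvr_core {R S : Type*} [CommRing R] [IsDomain R] [IsDiscreteValuationRing R]
    [CommRing S] [IsDomain S] [IsDiscreteValuationRing S] [Algebra R S]
    (hinj : Function.Injective (algebraMap R S))
    (χ : R[X]) (hmon : χ.Monic)
    (β : S) (hroot : Polynomial.aeval β χ = 0)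
    (hdvd : ∀ P : R[X], Polynomial.aeval β P = 0 → χ ∣ P)
    (hsurj : ∀ s : S, ∃ P : R[X], Polynomial.aeval β P = s)
    (hram : Ideal.map (algebraMap R S) (maximalIdeal R) ≤ maximalIdeal S ^ 2)
    {a b : Polynomial (R ⧸ maximalIdeal R ^ 2)}
    (hab : χ.map (Ideal.Quotient.mk (maximalIdeal R ^ 2)) = a * b) :
    IsUnit a ∨ IsUnit b := by
  by_contra hcon
  push_neg at hcon
  obtain ⟨ha, hb⟩ := hcon
  -- residue fields
  have hle : Ideal.map (algebraMap R S) (maximalIdeal R) ≤ maximalIdeal S :=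
    hram.trans (Ideal.pow_le_self two_ne_zero)
  have hmaps : ∀ x : R, x ∈ maximalIdeal R → algebraMap R S x ∈ maximalIdeal S :=
    fun x hx => hle (Ideal.mem_map_of_mem _ hx)
  let g : ResidueField R →+* ResidueField S :=
    Ideal.Quotient.lift (maximalIdeal R) ((residue S).comp (algebraMap R S))
      (fun x hx => by
        simp only [RingHom.comp_apply]
        rw [residue_eq_zero_iff]
        exact hmaps x hx)
  have hg : ∀ x : R, g (residue R x) = residue S (algebraMap R S x) :=
    fun x => Ideal.Quotient.lift_mk _ _ _
  set βk : ResidueField S := residue S β with hβk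
  have hA : ∀ P : R[X], Polynomial.eval₂ g βk (P.map (residue R))
      = residue S (Polynomial.aeval β P) := by
    intro P
    rw [Polynomial.eval₂_map, Polynomial.aeval_def, Polynomial.hom_eval₂]
    congr 1
  -- uniformizers
  obtain ⟨π, hπ⟩ := IsDiscreteValuationRing.exists_irreducible R
  obtain ⟨ϖ, hϖ⟩ := IsDiscreteValuationRing.exists_irreducible S
  have hmR : maximalIdeal R = Ideal.span {π} :=
    (IsDiscreteValuationRing.irreducible_iff_uniformizer π).mp hπ
  have hmS : maximalIdeal S = Ideal.span {ϖ} :=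
    (IsDiscreteValuationRing.irreducible_iff_uniformizer ϖ).mp hϖ
  set π' : S := algebraMap R S π with hπ'def
  have hπ'0 : π' ≠ 0 := fun h => hπ.ne_zero (hinj (by simpa using h))
  have hϖ0 : ϖ ≠ 0 := hϖ.ne_zero
  have hmem : ∀ (i : ℕ) (x : S), x ∈ maximalIdeal S ^ i ↔ ϖ ^ i ∣ x := by
    intro i x
    rw [hmS, Ideal.span_singleton_pow, Ideal.mem_span_singleton]
  have hπ'2 : π' ∈ maximalIdeal S ^ 2 :=
    hram (Ideal.mem_map_of_mem _ (by rw [hmR]; exact Ideal.mem_span_singleton_self π))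
  obtain ⟨e', he'⟩ := IsDiscreteValuationRing.associated_pow_irreducible hπ'0 hϖ
  have hϖe' : ϖ ^ e' ∣ π' := he'.symm.dvd
  have hπ'e : π' ∣ ϖ ^ e' := he'.dvd
  have he'2 : 2 ≤ e' := by
    by_contra hlt
    push_neg at hlt
    have h1 : ϖ ^ 2 ∣ ϖ ^ e' := dvd_trans ((hmem 2 π').mp hπ'2) hπ'e
    have h2 : ϖ ^ e' ∣ ϖ ^ 1 := pow_dvd_pow ϖ (by omega)
    obtain ⟨c, hc⟩ := dvd_trans h1 h2
    rw [pow_one, pow_two, mul_assoc] at hc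
    conv_lhs at hc => rw [← mul_one ϖ]
    have := mul_left_cancel₀ hϖ0 hc
    exact hϖ.not_isUnit (IsUnit.of_mul_eq_one _ this.symm)
  -- the minimal polynomial of the residue of β
  set ev : Polynomial (ResidueField R) →+* ResidueField S := Polynomial.eval₂RingHom g βk with hev
  have hevapply : ∀ P : Polynomial (ResidueField R), ev P = Polynomial.eval₂ g βk P :=
    fun P => rfl
  set χ' := χ.map (residue R) with hχ'def
  have hχ'mon : χ'.Monic := hmon.map _
  have hχ'0 : χ' ≠ 0 := hχ'mon.ne_zero
  have hχ'ker : ev χ' = 0 := by rw [hevapply, hχ'def, hA χ, hroot, map_zero]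
  obtain ⟨μ₀, hI⟩ : ∃ m, RingHom.ker ev = Ideal.span {m} :=
    (IsPrincipalIdealRing.principal (RingHom.ker ev)).principal
  have hμ₀dvd : μ₀ ∣ χ' := by
    rw [← Ideal.mem_span_singleton, ← hI]
    exact RingHom.mem_ker.mpr hχ'ker
  have hμ₀0 : μ₀ ≠ 0 := by
    rintro rfl
    exact hχ'0 (zero_dvd_iff.mp hμ₀dvd)
  have hμ₀u : ¬IsUnit μ₀ := by
    intro h
    have h1 : (1 : Polynomial (ResidueField R)) ∈ RingHom.ker ev := by
      rw [hI, Ideal.span_singleton_eq_top.mpr h]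
      trivial
    rw [RingHom.mem_ker, map_one] at h1
    exact one_ne_zero h1
  have hkerprime : (Ideal.span {μ₀}).IsPrime := hI ▸ (RingHom.ker_isPrime ev)
  have hμ₀p : Prime μ₀ := (Ideal.span_singleton_prime hμ₀0).mp hkerprime
  -- monic normalization
  set μ := μ₀ * Polynomial.C μ₀.leadingCoeff⁻¹ with hμdef
  have hμmon : μ.Monic := Polynomial.monic_mul_leadingCoeff_inv hμ₀0
  have hassoc : Associated μ₀ μ := by
    refine associated_mul_unit_right μ₀ _ ?_
    exact Polynomial.isUnit_C.mpr (isUnit_iff_ne_zero.mpr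
      (inv_ne_zero (Polynomial.leadingCoeff_ne_zero.mpr hμ₀0)))
  have hμp : Prime μ := hassoc.prime hμ₀p
  have hμ0 : μ ≠ 0 := hμp.ne_zero
  have hvanish : ∀ P : Polynomial (ResidueField R), ev P = 0 ↔ μ ∣ P := by
    intro P
    rw [← RingHom.mem_ker, hI, Ideal.mem_span_singleton]
    exact ⟨fun h => (hassoc.dvd_iff_dvd_left).mp h, fun h => (hassoc.dvd_iff_dvd_left).mpr h⟩
  set d := μ.natDegree with hddef
  have hd1 : 1 ≤ d := by
    rcases Nat.eq_zero_or_pos d with h0 | h; swap; · exact h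
    exact absurd (hμmon.natDegree_eq_zero.mp h0 ▸ isUnit_one) hμp.not_isUnit
  -- monic lift M of μ
  have hressurj : Function.Surjective (residue R) := Ideal.Quotient.mk_surjective
  obtain ⟨M, hM, hMdeg, hMmon⟩ :=
    Polynomial.lifts_and_natDegree_eq_and_monic
      ((Polynomial.mem_lifts μ).mpr (Polynomial.map_surjective _ hressurj μ)) hμmon
  -- helper: polynomials that die mod π
  have hB : ∀ P : R[X], P.map (residue R) = 0 → ∃ Q : R[X], P = Polynomial.C π * Q := by
    intro P hP
    refine (Polynomial.C_dvd_iff_dvd_coeff π P).mpr fun i => ?_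
    have h0 : residue R (P.coeff i) = 0 := by
      rw [← Polynomial.coeff_map, hP, Polynomial.coeff_zero]
    rw [residue_eq_zero_iff, hmR, Ideal.mem_span_singleton] at h0
    exact h0
  -- multiplicity decomposition of χ'
  have hfin : FiniteMultiplicity μ χ' := FiniteMultiplicity.of_not_isUnit hμp.not_isUnit hχ'0
  obtain ⟨ψ, hψeq, hψnd⟩ := hfin.exists_eq_pow_mul_and_not_dvd
  set E := multiplicity μ χ' with hEdef
  have hψ0 : ψ ≠ 0 := fun h => hψnd (h ▸ dvd_zero μ)
  have hE1 : 1 ≤ E := by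
    rcases Nat.eq_zero_or_pos E with h0 | h; swap; · exact h
    exfalso
    apply hψnd
    have := hμ₀dvd
    rw [hψeq, h0, pow_zero, one_mul] at this
    exact hassoc.dvd_iff_dvd_left.mp this
  have hN : χ.natDegree = E * d + ψ.natDegree := by
    have h1 : χ'.natDegree = χ.natDegree := hmon.natDegree_map _
    rw [← h1, hψeq, Polynomial.natDegree_mul (pow_ne_zero _ hμ0) hψ0,
      Polynomial.natDegree_pow]
  have hN1 : 1 ≤ χ.natDegree := by
    have : 1 ≤ E * d := Nat.one_le_iff_ne_zero.mpr (by positivity)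
    omega
  -- evaluation of M at β
  set Mβ : S := Polynomial.aeval β M with hMβdef
  have hμev : ev μ = 0 := (hvanish μ).mpr dvd_rfl
  have hMβm : Mβ ∈ maximalIdeal S := by
    rw [← residue_eq_zero_iff, hMβdef, ← hA M, hM]
    exact hμev
  -- the degree trick
  have hT : ∀ i : ℕ, π' ∣ Mβ ^ i → χ.natDegree ≤ i * d := by
    intro i hdvdi
    obtain ⟨w, hw⟩ := hdvdi
    obtain ⟨W, hW⟩ := hsurj w
    set W' := W %ₘ χ with hW'def
    have hW'β : Polynomial.aeval β W' = w := by
      rw [hW'def, Polynomial.modByMonic_eq_sub_mul_div W χ]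
      simp [hroot, hW]
    have h0 : Polynomial.aeval β (M ^ i - Polynomial.C π * W') = 0 := by
      simp only [map_sub, map_mul, map_pow, Polynomial.aeval_C, hW'β]
      rw [← hMβdef, ← hπ'def, hw, sub_self]
    have hdvd2 := hdvd _ h0
    have hmapMi : (M ^ i - Polynomial.C π * W').map (residue R) = μ ^ i := by
      have hπ0 : residue R π = 0 := by
        rw [residue_eq_zero_iff, hmR]
        exact Ideal.mem_span_singleton_self π
      simp [Polynomial.map_sub, Polynomial.map_mul, Polynomial.map_pow, hM, hπ0]
    have hne : M ^ i - Polynomial.C π * W' ≠ 0 := by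
      intro h
      rw [h, Polynomial.map_zero] at hmapMi
      exact pow_ne_zero i hμ0 hmapMi.symm
    have hle1 := Polynomial.natDegree_le_of_dvd hdvd2 hne
    have hle2 : (M ^ i - Polynomial.C π * W').natDegree
        ≤ max (i * d) (χ.natDegree - 1) := by
      refine le_trans (Polynomial.natDegree_sub_le _ _) ?_
      have h3 : (M ^ i).natDegree = i * d := by rw [hMmon.natDegree_pow, hMdeg]
      have h4 : (Polynomial.C π * W').natDegree ≤ χ.natDegree - 1 := by
        refine le_trans (Polynomial.natDegree_mul_le) ?_
        rcases eq_or_ne W' (0 : R[X]) with h5 | h5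
        · simp [h5]
        · have h6 : W'.degree < χ.degree := Polynomial.degree_modByMonic_lt W hmon
          have h7 : W'.natDegree < χ.natDegree := by
            rwa [← Polynomial.natDegree_lt_natDegree_iff h5] at h6
          simp only [Polynomial.natDegree_C, zero_add]
          omega
      omega
    have := le_trans hle1 hle2
    rcases le_max_iff.mp this with h | h
    · omega
    · omega
  -- ψ is a unit
  obtain ⟨Ψ, hΨ⟩ := Polynomial.map_surjective _ hressurj ψ
  have hΨβu : IsUnit (Polynomial.aeval β Ψ) := by
    by_contra hcontra
    have hmem1 : Polynomial.aeval β Ψ ∈ maximalIdeal S := hcontra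
    rw [← residue_eq_zero_iff, ← hA Ψ, hΨ] at hmem1
    exact hψnd ((hvanish ψ).mp hmem1)
  have hπ'Mβ : π' ∣ Mβ ^ E := by
    have hD : (χ - M ^ E * Ψ).map (residue R) = 0 := by
      rw [Polynomial.map_sub, Polynomial.map_mul, Polynomial.map_pow, hM, hΨ, ← hχ'def,
        hψeq, sub_self]
    obtain ⟨Q, hQ⟩ := hB _ hD
    have hval : Mβ ^ E * Polynomial.aeval β Ψ = -(π' * Polynomial.aeval β Q) := by
      have := congrArg (Polynomial.aeval β) hQ
      simp only [map_sub, map_mul, map_pow, Polynomial.aeval_C, hroot] at this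
      rw [← hπ'def] at this
      rw [hMβdef]
      linear_combination -this
    obtain ⟨u, hu⟩ := hΨβu
    have : Mβ ^ E = -(π' * Polynomial.aeval β Q) * ↑u⁻¹ := by
      rw [← hval, ← hu, mul_assoc]
      simp
    rw [this]
    exact Dvd.dvd.mul_right (dvd_neg.mpr (Dvd.intro _ rfl)) _
  have hψdeg : ψ.natDegree = 0 := by
    have := hT E hπ'Mβ
    omega
  obtain ⟨c₀, hc₀⟩ : ∃ c₀, ψ = Polynomial.C c₀ := ⟨ψ.coeff 0, Polynomial.eq_C_of_natDegree_eq_zero hψdeg⟩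
  have hψunit : IsUnit ψ := by
    rw [hc₀]
    exact Polynomial.isUnit_C.mpr (isUnit_iff_ne_zero.mpr (fun h => hψ0 (by rw [hc₀, h, Polynomial.C_0])))
  -- Mβ has valuation exactly one
  have hMβ2 : Mβ ∉ maximalIdeal S ^ 2 := by
    intro hm2
    have hϖ2 : ϖ ∈ maximalIdeal S ^ 2 := by
      obtain ⟨P, hP⟩ := hsurj ϖ
      have hϖm : residue S (Polynomial.aeval β P) = 0 := by
        rw [hP, residue_eq_zero_iff, hmS]
        exact Ideal.mem_span_singleton_self ϖ
      rw [← hA P] at hϖm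
      obtain ⟨qb, hqb⟩ := (hvanish _).mp hϖm
      obtain ⟨Q, hQ⟩ := Polynomial.map_surjective _ hressurj qb
      have hD : (P - M * Q).map (residue R) = 0 := by
        rw [Polynomial.map_sub, Polynomial.map_mul, hM, hQ, ← hqb, sub_self]
      obtain ⟨Q₂, hQ₂⟩ := hB _ hD
      have hval := congrArg (Polynomial.aeval β) hQ₂
      simp only [map_sub, map_mul, Polynomial.aeval_C] at hval
      rw [← hπ'def, hP, ← hMβdef] at hval
      have hϖeq : ϖ = Mβ * Polynomial.aeval β Q + π' * Polynomial.aeval β Q₂ := by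
        linear_combination hval
      rw [hϖeq]
      exact Ideal.add_mem _ (Ideal.mul_mem_right _ _ hm2) (Ideal.mul_mem_right _ _ hπ'2)
    obtain ⟨c, hc⟩ := (hmem 2 ϖ).mp hϖ2
    rw [pow_two, mul_assoc] at hc
    conv_lhs at hc => rw [← mul_one ϖ]
    exact hϖ.not_isUnit (IsUnit.of_mul_eq_one _ (mul_left_cancel₀ hϖ0 hc).symm)
  obtain ⟨t, ht⟩ := (hmem 1 Mβ).mp (by rwa [pow_one (maximalIdeal S)])
  rw [pow_one] at ht
  have htu : IsUnit t := by
    by_contra htc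
    have htm : t ∈ maximalIdeal S := htc
    rw [hmS, Ideal.mem_span_singleton] at htm
    refine hMβ2 ((hmem 2 Mβ).mpr ?_)
    rw [ht, pow_two]
    exact mul_dvd_mul_left ϖ htm
  -- lift the factorization mod 𝔪²
  obtain ⟨A, hA2⟩ := Polynomial.map_surjective _ Ideal.Quotient.mk_surjective a
  obtain ⟨B, hB2⟩ := Polynomial.map_surjective _ Ideal.Quotient.mk_surjective b
  have hq2 : (χ - A * B).map (Ideal.Quotient.mk (maximalIdeal R ^ 2)) = 0 := by
    rw [Polynomial.map_sub, Polynomial.map_mul, hA2, hB2, hab, sub_self]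
  have hCdvd : Polynomial.C (π ^ 2) ∣ (χ - A * B) := by
    refine (Polynomial.C_dvd_iff_dvd_coeff _ _).mpr fun i => ?_
    have h0 : Ideal.Quotient.mk (maximalIdeal R ^ 2) ((χ - A * B).coeff i) = 0 := by
      rw [← Polynomial.coeff_map, hq2, Polynomial.coeff_zero]
    rwa [Ideal.Quotient.eq_zero_iff_mem, hmR, Ideal.span_singleton_pow,
      Ideal.mem_span_singleton] at h0
  obtain ⟨T, hTfac⟩ := hCdvd
  have hABβ : Polynomial.aeval β A * Polynomial.aeval β B
      = -(π' ^ 2 * Polynomial.aeval β T) := by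
    have := congrArg (Polynomial.aeval β) hTfac
    simp only [map_sub, map_mul, map_pow, Polynomial.aeval_C, hroot] at this
    rw [← hπ'def] at this
    linear_combination -this
  -- reduction mod π of the factorization
  set Abar := A.map (residue R) with hAbardef
  set Bbar := B.map (residue R) with hBbardef
  have hfac : Abar * Bbar = χ' := by
    have hresπ2 : residue R (π ^ 2) = 0 := by
      rw [residue_eq_zero_iff, hmR]
      exact Ideal.mem_span_singleton.mpr (dvd_pow_self π two_ne_zero)
    have hD : (χ - A * B).map (residue R) = 0 := by
      rw [hTfac, Polynomial.map_mul, Polynomial.map_C, hresπ2, Polynomial.C_0, zero_mul]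
    rw [Polynomial.map_sub, Polynomial.map_mul, sub_eq_zero] at hD
    rw [hAbardef, hBbardef, ← hD, hχ'def]
  have hAdvd : Abar ∣ μ ^ E := by
    have h1 : Abar ∣ χ' := Dvd.intro _ hfac
    rw [hψeq] at h1
    exact dvd_trans h1 (associated_mul_unit_left (μ ^ E) ψ hψunit).dvd
  have hBdvd : Bbar ∣ μ ^ E := by
    have h1 : Bbar ∣ χ' := ⟨Abar, by rw [← hfac, mul_comm]⟩
    rw [hψeq] at h1
    exact dvd_trans h1 (associated_mul_unit_left (μ ^ E) ψ hψunit).dvd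
  obtain ⟨j, hjE, hjassoc⟩ := (dvd_prime_pow hμp E).mp hAdvd
  obtain ⟨j', hj'E, hj'assoc⟩ := (dvd_prime_pow hμp E).mp hBdvd
  -- a reduction that is a unit mod π gives a unit mod π²
  have hglue : ∀ x : R[X], IsUnit (x.map (residue R)) →
      IsUnit (x.map (Ideal.Quotient.mk (maximalIdeal R ^ 2))) := by
    intro x hx
    rw [Polynomial.isUnit_iff] at hx
    obtain ⟨r, hru, hrC⟩ := hx
    refine Polynomial.isUnit_iff_coeff_isUnit_isNilpotent.mpr ⟨?_, ?_⟩
    · have h0 : residue R (x.coeff 0) = r := by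
        rw [← Polynomial.coeff_map, ← hrC, Polynomial.coeff_C]
        simp
      have hxu : IsUnit (x.coeff 0) := by
        by_contra hnu
        have hmm : x.coeff 0 ∈ maximalIdeal R := hnu
        rw [← residue_eq_zero_iff] at hmm
        rw [hmm] at h0
        exact hru.ne_zero h0.symm
      rw [Polynomial.coeff_map]
      exact hxu.map _
    · intro i hi
      have h0 : residue R (x.coeff i) = 0 := by
        rw [← Polynomial.coeff_map, ← hrC, Polynomial.coeff_C]
        simp [hi]
      rw [residue_eq_zero_iff] at h0
      rw [Polynomial.coeff_map]
      refine ⟨2, ?_⟩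
      rw [← map_pow, Ideal.Quotient.eq_zero_iff_mem]
      exact Ideal.pow_mem_pow h0 2
  have hj1 : 1 ≤ j := by
    rcases Nat.eq_zero_or_pos j with h0 | h; swap; · exact h
    exfalso
    apply ha
    rw [← hA2]
    apply hglue
    rw [h0, pow_zero] at hjassoc
    exact associated_one_iff_isUnit.mp hjassoc
  have hj'1 : 1 ≤ j' := by
    rcases Nat.eq_zero_or_pos j' with h0 | h; swap; · exact h
    exfalso
    apply hb
    rw [← hB2]
    apply hglue
    rw [h0, pow_zero] at hj'assoc
    exact associated_one_iff_isUnit.mp hj'assoc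
  -- explicit unit decompositions
  obtain ⟨uA, huA⟩ := hjassoc
  obtain ⟨uB, huB⟩ := hj'assoc
  have hAbar0 : Abar = μ ^ j * ↑uA⁻¹ := (Units.eq_mul_inv_iff_mul_eq uA).mpr huA
  have hBbar0 : Bbar = μ ^ j' * ↑uB⁻¹ := (Units.eq_mul_inv_iff_mul_eq uB).mpr huB
  obtain ⟨cA, hcAu, hcAC⟩ := Polynomial.isUnit_iff.mp (uA⁻¹ : _ˣ).isUnit
  obtain ⟨cB, hcBu, hcBC⟩ := Polynomial.isUnit_iff.mp (uB⁻¹ : _ˣ).isUnit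
  have hA0 : Abar ≠ 0 := by
    rw [hAbar0, ← hcAC]
    exact mul_ne_zero (pow_ne_zero _ hμ0) (Polynomial.C_ne_zero.mpr hcAu.ne_zero)
  have hB0 : Bbar ≠ 0 := by
    rw [hBbar0, ← hcBC]
    exact mul_ne_zero (pow_ne_zero _ hμ0) (Polynomial.C_ne_zero.mpr hcBu.ne_zero)
  have hdegA : Abar.natDegree = j * d := by
    rw [hAbar0, ← hcAC, Polynomial.natDegree_mul (pow_ne_zero _ hμ0)
      (Polynomial.C_ne_zero.mpr hcAu.ne_zero), Polynomial.natDegree_pow,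
      Polynomial.natDegree_C, add_zero]
  have hdegB : Bbar.natDegree = j' * d := by
    rw [hBbar0, ← hcBC, Polynomial.natDegree_mul (pow_ne_zero _ hμ0)
      (Polynomial.C_ne_zero.mpr hcBu.ne_zero), Polynomial.natDegree_pow,
      Polynomial.natDegree_C, add_zero]
  have hsum : j + j' = E := by
    have h1 : χ'.natDegree = Abar.natDegree + Bbar.natDegree := by
      rw [← hfac, Polynomial.natDegree_mul hA0 hB0]
    have h2 : χ'.natDegree = χ.natDegree := hmon.natDegree_map _
    rw [h2, hN, hψdeg, hdegA, hdegB, add_zero] at h1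
    have h3 : (j + j') * d = E * d := by rw [add_mul]; omega
    exact Nat.eq_of_mul_eq_mul_right (by omega) h3
  -- lifts of the unit constants
  obtain ⟨uAr, huAr⟩ := hressurj cA
  obtain ⟨uBr, huBr⟩ := hressurj cB
  have huAru : IsUnit uAr := by
    by_contra hnu
    have hmm : uAr ∈ maximalIdeal R := hnu
    rw [← residue_eq_zero_iff, huAr] at hmm
    exact hcAu.ne_zero hmm
  have huBru : IsUnit uBr := by
    by_contra hnu
    have hmm : uBr ∈ maximalIdeal R := hnu
    rw [← residue_eq_zero_iff, huBr] at hmm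
    exact hcBu.ne_zero hmm
  -- evaluations of A and B at β
  have hDA : (A - Polynomial.C uAr * M ^ j).map (residue R) = 0 := by
    rw [Polynomial.map_sub, Polynomial.map_mul, Polynomial.map_C, Polynomial.map_pow, hM,
      huAr, ← hAbardef, hAbar0, ← hcAC]
    ring
  have hDB : (B - Polynomial.C uBr * M ^ j').map (residue R) = 0 := by
    rw [Polynomial.map_sub, Polynomial.map_mul, Polynomial.map_C, Polynomial.map_pow, hM,
      huBr, ← hBbardef, hBbar0, ← hcBC]
    ring
  obtain ⟨QA, hQA⟩ := hB _ hDA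
  obtain ⟨QB, hQB⟩ := hB _ hDB
  set UA := algebraMap R S uAr with hUAdef
  set UB := algebraMap R S uBr with hUBdef
  have hAval : Polynomial.aeval β A = UA * (ϖ * t) ^ j + π' * Polynomial.aeval β QA := by
    have h := congrArg (Polynomial.aeval β) hQA
    simp only [map_sub, map_mul, map_pow, Polynomial.aeval_C] at h
    rw [← hπ'def, ← hUAdef] at h
    rw [← ht, hMβdef]
    linear_combination h
  have hBval : Polynomial.aeval β B = UB * (ϖ * t) ^ j' + π' * Polynomial.aeval β QB := by
    have h := congrArg (Polynomial.aeval β) hQB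
    simp only [map_sub, map_mul, map_pow, Polynomial.aeval_C] at h
    rw [← hπ'def, ← hUBdef] at h
    rw [← ht, hMβdef]
    linear_combination h
  -- j and j' are both < e'
  have hjlt : j < e' := by
    by_contra hge
    push_neg at hge
    have hdvdj : π' ∣ Mβ ^ j := by
      refine dvd_trans hπ'e (dvd_trans (pow_dvd_pow ϖ hge) ?_)
      rw [ht, mul_pow]
      exact dvd_mul_right _ _
    have := hT j hdvdj
    rw [hN, hψdeg, add_zero] at this
    have hEj : E ≤ j := Nat.le_of_mul_le_mul_right this (by omega)
    omega
  have hj'lt : j' < e' := by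
    by_contra hge
    push_neg at hge
    have hdvdj : π' ∣ Mβ ^ j' := by
      refine dvd_trans hπ'e (dvd_trans (pow_dvd_pow ϖ hge) ?_)
      rw [ht, mul_pow]
      exact dvd_mul_right _ _
    have := hT j' hdvdj
    rw [hN, hψdeg, add_zero] at this
    have hEj : E ≤ j' := Nat.le_of_mul_le_mul_right this (by omega)
    omega
  -- final valuation count
  set QAβ := Polynomial.aeval β QA
  set QBβ := Polynomial.aeval β QB
  have hkey : Polynomial.aeval β A * Polynomial.aeval β B
      - UA * UB * t ^ (j + j') * ϖ ^ (j + j')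
      = UA * (ϖ * t) ^ j * (π' * QBβ) + UB * (ϖ * t) ^ j' * (π' * QAβ)
        + (π' * QAβ) * (π' * QBβ) := by
    rw [hAval, hBval]
    ring
  have hdvdX : ϖ ^ (j + j' + 1) ∣ Polynomial.aeval β A * Polynomial.aeval β B := by
    rw [hABβ]
    refine dvd_neg.mpr ?_
    have h1 : ϖ ^ (e' + e') ∣ π' ^ 2 := by
      rw [pow_add, pow_two]
      exact mul_dvd_mul hϖe' hϖe'
    exact dvd_trans (pow_dvd_pow ϖ (by omega)) (h1.mul_right _)
  have hR1 : ϖ ^ (j + j' + 1) ∣ UA * (ϖ * t) ^ j * (π' * QBβ)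
      + UB * (ϖ * t) ^ j' * (π' * QAβ) + (π' * QAβ) * (π' * QBβ) := by
    have d1 : ϖ ^ (j + j' + 1) ∣ UA * (ϖ * t) ^ j * (π' * QBβ) := by
      have h2 : UA * (ϖ * t) ^ j * (π' * QBβ) = (ϖ ^ j * π') * (UA * t ^ j * QBβ) := by ring
      rw [h2]
      refine Dvd.dvd.mul_right ?_ _
      calc ϖ ^ (j + j' + 1) = ϖ ^ j * ϖ ^ (j' + 1) := by rw [show j + j' + 1 = j + (j' + 1) by omega, pow_add]
        _ ∣ ϖ ^ j * π' := mul_dvd_mul_left _ (dvd_trans (pow_dvd_pow ϖ (by omega)) hϖe')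
    have d2 : ϖ ^ (j + j' + 1) ∣ UB * (ϖ * t) ^ j' * (π' * QAβ) := by
      have h2 : UB * (ϖ * t) ^ j' * (π' * QAβ) = (ϖ ^ j' * π') * (UB * t ^ j' * QAβ) := by ring
      rw [h2]
      refine Dvd.dvd.mul_right ?_ _
      calc ϖ ^ (j + j' + 1) = ϖ ^ j' * ϖ ^ (j + 1) := by rw [show j + j' + 1 = j' + (j + 1) by omega, pow_add]
        _ ∣ ϖ ^ j' * π' := mul_dvd_mul_left _ (dvd_trans (pow_dvd_pow ϖ (by omega)) hϖe')
    have d3 : ϖ ^ (j + j' + 1) ∣ (π' * QAβ) * (π' * QBβ) := by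
      have h2 : (π' * QAβ) * (π' * QBβ) = (π' * π') * (QAβ * QBβ) := by ring
      rw [h2]
      refine Dvd.dvd.mul_right ?_ _
      calc ϖ ^ (j + j' + 1) ∣ ϖ ^ (e' + e') := pow_dvd_pow ϖ (by omega)
        _ = ϖ ^ e' * ϖ ^ e' := by rw [← pow_add]
        _ ∣ π' * π' := mul_dvd_mul hϖe' hϖe'
    exact dvd_add (dvd_add d1 d2) d3
  have hfinal : ϖ ^ (j + j' + 1) ∣ UA * UB * t ^ (j + j') * ϖ ^ (j + j') := by
    have := dvd_sub hdvdX hR1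
    rwa [← hkey, sub_sub_cancel] at this
  obtain ⟨z, hz⟩ := hfinal
  have hcancel : UA * UB * t ^ (j + j') = ϖ * z := by
    refine mul_left_cancel₀ (pow_ne_zero (j + j') hϖ0) ?_
    linear_combination hz
  have hunit : IsUnit (UA * UB * t ^ (j + j')) :=
    ((huAru.map (algebraMap R S)).mul (huBru.map (algebraMap R S))).mul (htu.pow _)
  exact hϖ.not_isUnit (isUnit_of_dvd_unit ⟨z, hcancel⟩ hunit)


theorem charpoly_mod_sq_irreducible
    {p : ℕ} [Fact (Nat.Prime p)] (hp : p ≠ 2)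
    {F : Type*} [Field F] [Algebra ℚ_[p] F] [FiniteDimensional ℚ_[p] F]
    {OF : Type*} [CommRing OF] [IsDomain OF] [IsDiscreteValuationRing OF]
    [Algebra OF F] [IsFractionRing OF F]
    [Algebra ℤ_[p] OF] [Algebra ℤ_[p] F] [IsScalarTower ℤ_[p] ℚ_[p] F]
    [IsScalarTower ℤ_[p] OF F] [IsIntegralClosure OF ℤ_[p] F]
    {K : Type*} [Field K] [Algebra F K] [FiniteDimensional F K]
    {OK : Type*} [CommRing OK] [IsDomain OK] [IsDiscreteValuationRing OK]
    [Algebra OK K] [IsFractionRing OK K]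
    [Algebra OF OK] [Algebra OF K] [IsScalarTower OF OK K] [IsScalarTower OF F K]
    [IsIntegralClosure OK OF K]
    (hn : 1 < Module.finrank F K) (hpn : ¬ p ∣ Module.finrank F K)
    [Module.Free OF OK] [Module.Finite OF OK]
    {n : ℕ} (hn : n = Module.finrank F K) (b : Module.Basis (Fin n) OF OK)
    (e : ℕ)
    (he : e = Ideal.ramificationIdx' (maximalIdeal OF) (maximalIdeal OK))
    (he1 : 1 < e)
    (β : OK) (hβ : Algebra.adjoin OF {β} = ⊤) :
    Irreducible ((Matrix.charpoly (Algebra.leftMulMatrix b β)).map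
        (Ideal.Quotient.mk (maximalIdeal OF ^ 2))) ∧
      ¬ ∃ g h : Polynomial (OF ⧸ maximalIdeal OF ^ 2), g.Monic ∧ h.Monic ∧
          0 < g.degree ∧ 0 < h.degree ∧
          (Matrix.charpoly (Algebra.leftMulMatrix b β)).map
            (Ideal.Quotient.mk (maximalIdeal OF ^ 2)) = g * h := by
  have hn1 : 1 < Module.finrank F K := by assumption
  -- injectivity of OF → OK
  have hinj : Function.Injective (algebraMap OF OK) := by
    have h1 : Function.Injective (algebraMap OF K) := by
      rw [IsScalarTower.algebraMap_eq OF F K]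
      exact (algebraMap F K).injective.comp (IsFractionRing.injective OF F)
    rw [IsScalarTower.algebraMap_eq OF OK K] at h1
    exact Function.Injective.of_comp h1
  haveI : Module.IsTorsionFree OF OK := NoZeroSMulDivisors.iff_algebraMap_injective.mpr hinj
  have hint : IsIntegral OF β := IsIntegral.of_finite OF β
  -- the characteristic polynomial is the minimal polynomial
  set χ := Matrix.charpoly (Algebra.leftMulMatrix b β) with hχdef
  have hchar : χ = minpoly OF β := by
    let e1 : Algebra.adjoin OF ({β} : Set OK) ≃ₐ[OF] OK :=
      (Subalgebra.equivOfEq _ ⊤ hβ).trans Subalgebra.topEquiv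
    let pb : PowerBasis OF OK := (Algebra.adjoin.powerBasis' hint).map e1
    have hgen : pb.gen = β := by
      show e1 (Algebra.adjoin.powerBasis' hint).gen = β
      rw [Algebra.adjoin.powerBasis'_gen]
      rfl
    have hpb := charpoly_leftMulMatrix pb
    rw [hgen] at hpb
    rw [Algebra.leftMulMatrix_apply, LinearMap.charpoly_toMatrix] at hpb
    rw [hχdef, Algebra.leftMulMatrix_apply, LinearMap.charpoly_toMatrix]
    exact hpb
  have hmonχ : χ.Monic := Matrix.charpoly_monic _
  have hroot : Polynomial.aeval β χ = 0 := by rw [hchar]; exact minpoly.aeval OF β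
  have hdvd : ∀ P : Polynomial OF, Polynomial.aeval β P = 0 → χ ∣ P := by
    intro P hP
    rw [hchar]
    exact minpoly.isIntegrallyClosed_dvd hint hP
  have hsurj : ∀ s : OK, ∃ P : Polynomial OF, Polynomial.aeval β P = s := by
    intro s
    have : s ∈ Algebra.adjoin OF ({β} : Set OK) := hβ.symm ▸ Algebra.mem_top
    rwa [Algebra.adjoin_singleton_eq_range_aeval, AlgHom.mem_range] at this
  have hram : Ideal.map (algebraMap OF OK) (maximalIdeal OF) ≤ maximalIdeal OK ^ 2 := by
    by_contra hno
    have hle1 : Ideal.ramificationIdx' (maximalIdeal OF)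
        (maximalIdeal OK) ≤ 1 := by
      rw [Ideal.ramificationIdx']
      refine csSup_le ⟨0, by simp⟩ fun m hm => ?_
      by_contra hm2
      push_neg at hm2
      exact hno (le_trans hm (Ideal.pow_le_pow_right (by omega)))
    omega
  have hfact : ∀ a b : Polynomial (OF ⧸ maximalIdeal OF ^ 2),
      χ.map (Ideal.Quotient.mk (maximalIdeal OF ^ 2)) = a * b → IsUnit a ∨ IsUnit b :=
    fun a b hab => dvr_core hinj χ hmonχ β hroot hdvd hsurj hram hab
  haveI : Nontrivial (OF ⧸ maximalIdeal OF ^ 2) := by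
    refine Ideal.Quotient.nontrivial_iff.mpr fun htop => ?_
    exact (maximalIdeal.isMaximal OF).ne_top (top_le_iff.mp (htop ▸ Ideal.pow_le_self two_ne_zero))
  have hdegχ : (χ.map (Ideal.Quotient.mk (maximalIdeal OF ^ 2))).natDegree = n := by
    rw [hmonχ.natDegree_map, hχdef, Matrix.charpoly_natDegree_eq_dim, Fintype.card_fin]
  have hnotunit : ∀ g : Polynomial (OF ⧸ maximalIdeal OF ^ 2),
      g.Monic → 0 < g.natDegree → ¬IsUnit g := by
    intro g hg hdg hu
    obtain ⟨-, h2⟩ := Polynomial.isUnit_iff_coeff_isUnit_isNilpotent.mp hu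
    have h3 := h2 g.natDegree (by omega)
    rw [hg.coeff_natDegree] at h3
    obtain ⟨m, hm⟩ := h3
    rw [one_pow] at hm
    exact one_ne_zero hm
  constructor
  · constructor
    · exact hnotunit _ (hmonχ.map _) (by omega)
    · intro a b' hab
      exact hfact a b' hab
  · rintro ⟨g1, h1, hg1, hh1, hdg1, hdh1, heq⟩
    rcases hfact g1 h1 heq with hu | hu
    · exact hnotunit g1 hg1 (Polynomial.natDegree_pos_iff_degree_pos.mpr hdg1) hu
    · exact hnotunit h1 hh1 (Polynomial.natDegree_pos_iff_degree_pos.mpr hdh1) hu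
end

section
/- Let β ∈ M_n(O_F) be such that the reduction modulo 𝔭_F of its characteristic polynomial χ_β(t) = det(t·1_n − β) is the minimal polynomial over 𝔽 of the reduction β̄ ∈ M_n(𝔽). Then {X ∈ M_n(O_F) : Xβ = βX} = O_F[β], the O_F-subalgebra of M_n(O_F) generated by β. -/
/-!
STATEMENT 3: Let `β ∈ M_n(O_F)` be such that the reduction modulo `𝔭_F` of its
characteristic polynomial `χ_β(t) = det(t·1_n − β)` is the minimal polynomial over `𝔽`
of the reduction `β̄ ∈ M_n(𝔽)`. Then `{X ∈ M_n(O_F) : Xβ = βX} = O_F[β]`, the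
`O_F`-subalgebra of `M_n(O_F)` generated by `β`.

Context: `p` odd prime, `F/ℚ_p` finite with ring of integers `OF`, maximal ideal `𝔭_F`
and residue field `𝔽 = ResidueField OF`.
-/

open IsLocalRing Polynomial Matrix

section Helpers

variable {R : Type*} [CommRing R] {n : ℕ}

private lemma sum_mulVec' {ι : Type*} (s : Finset ι)
    (M : ι → Matrix (Fin n) (Fin n) R) (v : Fin n → R) :
    (∑ i ∈ s, M i) *ᵥ v = ∑ i ∈ s, M i *ᵥ v := by
  funext r
  simp only [Matrix.mulVec, dotProduct, Matrix.sum_apply, Finset.sum_mul,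
    Finset.sum_apply]
  exact Finset.sum_comm

private lemma aeval_mul_mulVec (B : Matrix (Fin n) (Fin n) R) (g h : R[X]) (u : Fin n → R) :
    (aeval B (g * h)) *ᵥ u = (aeval B g) *ᵥ ((aeval B h) *ᵥ u) := by
  rw [_root_.map_mul, Matrix.mulVec_mulVec]

private lemma exists_mulVec_ne_zero {M : Matrix (Fin n) (Fin n) R} (h : M ≠ 0) :
    ∃ u : Fin n → R, M *ᵥ u ≠ 0 := by
  classical
  by_contra hh
  push_neg at hh
  apply h
  ext r j
  have := congrFun (hh (Pi.single j 1)) r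
  simpa [Matrix.mulVec_single] using this

end Helpers

section FieldLemma

variable {K : Type*} [Field K] {n : ℕ}

/-- The ideal of polynomials `g` with `g(B) v = 0`. -/
private def killIdeal (B : Matrix (Fin n) (Fin n) K) (v : Fin n → K) : Ideal K[X] where
  carrier := {g | (aeval B g) *ᵥ v = 0}
  add_mem' := by
    intro a b ha hb
    simp only [Set.mem_setOf_eq, map_add, Matrix.add_mulVec] at *
    rw [ha, hb, add_zero]
  zero_mem' := by simp [Set.mem_setOf_eq]
  smul_mem' := by
    intro c g hg
    simp only [Set.mem_setOf_eq, smul_eq_mul] at *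
    rw [aeval_mul_mulVec, hg, Matrix.mulVec_zero]

private lemma mem_killIdeal_iff {B : Matrix (Fin n) (Fin n) K} {v : Fin n → K} {g : K[X]} :
    g ∈ killIdeal B v ↔ (aeval B g) *ᵥ v = 0 := Iff.rfl

/-- There is a vector of order exactly `p^e` when `p^e` exactly divides the minimal
polynomial. -/
private lemma prime_pow_order (B : Matrix (Fin n) (Fin n) K)
    {p c : K[X]} {e : ℕ} (hp : Irreducible p) (he : 1 ≤ e)
    (hμ : minpoly K B = p ^ e * c) (hpc : ¬ p ∣ c) :
    ∃ w : Fin n → K, (aeval B (p ^ e)) *ᵥ w = 0 ∧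
      ∀ g : K[X], (aeval B g) *ᵥ w = 0 → p ^ e ∣ g := by
  classical
  have hint : IsIntegral K B := Algebra.IsIntegral.isIntegral B
  have hμ0 : minpoly K B ≠ 0 := minpoly.ne_zero hint
  have hc0 : c ≠ 0 := fun h => hμ0 (by rw [hμ, h, mul_zero])
  have hp0 : p ≠ 0 := hp.ne_zero
  -- the matrix `(c * p^(e-1))(B)` is nonzero
  have hM : aeval B (c * p ^ (e - 1)) ≠ 0 := by
    intro h0
    have hdvd : minpoly K B ∣ c * p ^ (e - 1) := minpoly.dvd K B h0
    rw [hμ] at hdvd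
    have h2 : p ^ e * c ∣ p ^ (e - 1) * c := by rwa [mul_comm c] at hdvd
    have h3 : p ^ e ∣ p ^ (e - 1) := (mul_dvd_mul_iff_right hc0).mp h2
    have h4 : p ^ (e - 1) * p ∣ p ^ (e - 1) * 1 := by
      rw [mul_one]
      calc p ^ (e - 1) * p = p ^ e := by
            rw [← pow_succ]; congr 1; omega
        _ ∣ p ^ (e - 1) := h3
    have h5 : p ∣ 1 := (mul_dvd_mul_iff_left (pow_ne_zero _ hp0)).mp h4
    exact hp.not_isUnit (isUnit_of_dvd_one h5)
  obtain ⟨u, hu⟩ := exists_mulVec_ne_zero hM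
  refine ⟨(aeval B c) *ᵥ u, ?_, ?_⟩
  · rw [← aeval_mul_mulVec, ← hμ, minpoly.aeval, Matrix.zero_mulVec]
  · intro g hg
    set w : Fin n → K := (aeval B c) *ᵥ u with hw
    haveI hprin : (killIdeal B w).IsPrincipal := IsPrincipalIdealRing.principal _
    set d := Submodule.IsPrincipal.generator (killIdeal B w) with hd
    have hmem : ∀ {q : K[X]}, q ∈ killIdeal B w ↔ d ∣ q := fun {q} =>
      (Submodule.IsPrincipal.mem_iff_generator_dvd (killIdeal B w))
    have hpe_mem : (p ^ e : K[X]) ∈ killIdeal B w := by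
      rw [mem_killIdeal_iff, hw, ← aeval_mul_mulVec, ← hμ, minpoly.aeval, Matrix.zero_mulVec]
    have hdvd_pe : d ∣ p ^ e := hmem.mp hpe_mem
    obtain ⟨i, hie, hassoc⟩ := (dvd_prime_pow hp.prime e).mp hdvd_pe
    have hie' : i = e := by
      by_contra hne
      have hile : i ≤ e - 1 := by omega
      have h6 : d ∣ p ^ (e - 1) := hassoc.dvd.trans (pow_dvd_pow p hile)
      have h7 : (p ^ (e - 1) : K[X]) ∈ killIdeal B w := hmem.mpr h6
      rw [mem_killIdeal_iff, hw, ← aeval_mul_mulVec, mul_comm] at h7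
      exact hu h7
    subst hie'
    exact hassoc.symm.dvd.trans (hmem.mp hg)

/-- Key induction: for every "unitary divisor" `m` of the minimal polynomial there exists
a vector of order exactly `m`. -/
private lemma key_order (B : Matrix (Fin n) (Fin n) K) :
    ∀ N : ℕ, ∀ m : K[X], m.natDegree ≤ N →
      (∃ c, minpoly K B = m * c ∧ IsCoprime m c) →
      ∃ v : Fin n → K, (aeval B m) *ᵥ v = 0 ∧ ∀ g : K[X], (aeval B g) *ᵥ v = 0 → m ∣ g := by
  have hint : IsIntegral K B := Algebra.IsIntegral.isIntegral B
  have hμ0 : minpoly K B ≠ 0 := minpoly.ne_zero hint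
  intro N
  induction N with
  | zero =>
    intro m hdeg hc
    obtain ⟨c, hc, hcop⟩ := hc
    have hm0 : m ≠ 0 := left_ne_zero_of_mul (hc ▸ hμ0)
    have hum : IsUnit m := by
      obtain ⟨a, ha⟩ := Polynomial.natDegree_eq_zero.mp (Nat.le_zero.mp hdeg)
      have ha0 : a ≠ 0 := by rintro rfl; simp at ha; exact hm0 ha.symm
      rw [← ha]
      exact Polynomial.isUnit_C.mpr (isUnit_iff_ne_zero.mpr ha0)
    exact ⟨0, Matrix.mulVec_zero _, fun g _ => hum.dvd⟩
  | succ N ih =>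
    intro m hdeg hc
    obtain ⟨c, hc, hcop⟩ := hc
    by_cases hu : IsUnit m
    · exact ⟨0, Matrix.mulVec_zero _, fun g _ => hu.dvd⟩
    have hm0 : m ≠ 0 := left_ne_zero_of_mul (hc ▸ hμ0)
    obtain ⟨q, hq, hqm⟩ := WfDvdMonoid.exists_irreducible_factor hu hm0
    obtain ⟨e, m', hqm', hm'⟩ := WfDvdMonoid.max_power_factor hm0 hq
    have hq0 : q ≠ 0 := hq.ne_zero
    have he : 1 ≤ e := by
      rcases Nat.eq_zero_or_pos e with h | h
      · exfalso; apply hqm'; rw [h, pow_zero, one_mul] at hm'; rwa [← hm']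
      · exact h
    have hm'0 : m' ≠ 0 := right_ne_zero_of_mul (hm' ▸ hm0)
    have hm'dvd : m' ∣ m := ⟨q ^ e, by rw [hm']; ring⟩
    -- coprimality facts
    have hqc : ¬ q ∣ c := fun h => hq.not_isUnit (hcop.isUnit_of_dvd' hqm h)
    have hqem' : IsCoprime (q ^ e) m' := (hq.coprime_iff_not_dvd.mpr hqm').pow_left
    -- degree drop
    have hdegq : 1 ≤ q.natDegree := hq.natDegree_pos
    have hdegm : m.natDegree = e * q.natDegree + m'.natDegree := by
      rw [hm', Polynomial.natDegree_mul (pow_ne_zero _ hq0) hm'0, Polynomial.natDegree_pow]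
    have hdegm' : m'.natDegree ≤ N := by
      have h1 : 1 ≤ e * q.natDegree := Nat.one_le_iff_ne_zero.mpr (by positivity)
      omega
    -- apply the induction hypothesis to `m'`
    have hcop' : ∃ c', minpoly K B = m' * c' ∧ IsCoprime m' c' := by
      refine ⟨q ^ e * c, by rw [hc, hm']; ring, ?_⟩
      exact (hqem'.symm).mul_right (hcop.of_isCoprime_of_dvd_left hm'dvd)
    obtain ⟨v', hv'0, hv'⟩ := ih m' hdegm' hcop'
    -- apply the prime power case to `q ^ e`
    have hμq : minpoly K B = q ^ e * (m' * c) := by rw [hc, hm']; ring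
    have hqm'c : ¬ q ∣ m' * c := by
      intro h
      rcases hq.prime.dvd_mul.mp h with h | h
      · exact hqm' h
      · exact hqc h
    obtain ⟨vq, hvq0, hvq⟩ := prime_pow_order B hq he hμq hqm'c
    refine ⟨vq + v', ?_, ?_⟩
    · rw [Matrix.mulVec_add, hm']
      have h1 : (aeval B (q ^ e * m')) *ᵥ vq = 0 := by
        rw [mul_comm, aeval_mul_mulVec, hvq0, Matrix.mulVec_zero]
      have h2 : (aeval B (q ^ e * m')) *ᵥ v' = 0 := by
        rw [aeval_mul_mulVec, hv'0, Matrix.mulVec_zero]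
      rw [h1, h2, add_zero]
    · intro g hg
      have hkill : ∀ h : K[X], (aeval B (h * g)) *ᵥ (vq + v') = 0 := fun h => by
        rw [aeval_mul_mulVec, hg, Matrix.mulVec_zero]
      -- q^e divides g
      have hqeg : q ^ e ∣ g := by
        have hA : (aeval B (m' * g)) *ᵥ v' = 0 := by
          rw [mul_comm, aeval_mul_mulVec, hv'0, Matrix.mulVec_zero]
        have hB : (aeval B (m' * g)) *ᵥ vq = 0 := by
          have h8 := hkill m'
          rw [Matrix.mulVec_add, hA, add_zero] at h8
          exact h8
        exact hqem'.dvd_of_dvd_mul_left (hvq _ hB)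
      -- m' divides g
      have hm'g : m' ∣ g := by
        have hA : (aeval B (q ^ e * g)) *ᵥ vq = 0 := by
          rw [mul_comm, aeval_mul_mulVec, hvq0, Matrix.mulVec_zero]
        have hB : (aeval B (q ^ e * g)) *ᵥ v' = 0 := by
          have h8 := hkill (q ^ e)
          rw [Matrix.mulVec_add, hA, zero_add] at h8
          exact h8
        exact hqem'.symm.dvd_of_dvd_mul_left (hv' _ hB)
      rw [hm']
      exact hqem'.mul_dvd hqeg hm'g

/-- Over a field, if the minimal polynomial of `B` has degree `n`, then there is a cyclic
vector `w`; the matrix whose rows are `B^i *ᵥ w` is invertible. -/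
private lemma exists_unit_det_powers (B : Matrix (Fin n) (Fin n) K)
    (hdeg : (minpoly K B).natDegree = n) :
    ∃ w : Fin n → K,
      IsUnit (Matrix.of fun i r : Fin n => ((B ^ (i : ℕ)) *ᵥ w) r) := by
  classical
  obtain ⟨w, -, hw⟩ := key_order B (minpoly K B).natDegree (minpoly K B) le_rfl
    ⟨1, (mul_one _).symm, isCoprime_one_right⟩
  refine ⟨w, ?_⟩
  rw [← Matrix.linearIndependent_rows_iff_isUnit]
  rw [Fintype.linearIndependent_iff]
  intro a ha i
  set g : K[X] := ∑ j : Fin n, C (a j) * X ^ (j : ℕ) with hgdef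
  have hgB : aeval B g = ∑ j : Fin n, a j • B ^ (j : ℕ) := by
    rw [hgdef, map_sum]
    refine Finset.sum_congr rfl fun j _ => ?_
    rw [_root_.map_mul, aeval_C, map_pow, aeval_X, Algebra.smul_def]
  have hgv : (aeval B g) *ᵥ w = 0 := by
    rw [hgB, sum_mulVec']
    simpa [Matrix.smul_mulVec] using ha
  have hdvd := hw g hgv
  have hg0 : g = 0 := by
    by_contra h0
    have h1 : (minpoly K B).natDegree ≤ g.natDegree := Polynomial.natDegree_le_of_dvd hdvd h0
    have h2 : g.natDegree ≤ n - 1 := by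
      apply Polynomial.natDegree_sum_le_of_forall_le
      intro j _
      refine le_trans (Polynomial.natDegree_C_mul_le _ _) ?_
      rw [Polynomial.natDegree_X_pow]
      have := j.isLt
      omega
    have h3 : 0 < n := i.pos
    omega
  have hcoeff := congrArg (fun q : K[X] => q.coeff (i : ℕ)) hg0
  simp only [hgdef, Polynomial.finset_sum_coeff, Polynomial.coeff_C_mul,
    Polynomial.coeff_X_pow, Polynomial.coeff_zero, mul_ite, mul_one, mul_zero,
    Fin.val_eq_val, Finset.sum_ite_eq, Finset.sum_ite_eq', Finset.mem_univ, if_true] at hcoeff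
  exact hcoeff

end FieldLemma

theorem commutant_eq_adjoin_of_charpoly_mod_eq_minpoly
    {p : ℕ} [Fact (Nat.Prime p)] (hp : p ≠ 2)
    {F : Type*} [Field F] [Algebra ℚ_[p] F] [FiniteDimensional ℚ_[p] F]
    {OF : Type*} [CommRing OF] [IsDomain OF] [IsDiscreteValuationRing OF]
    [Algebra OF F] [IsFractionRing OF F]
    [Algebra ℤ_[p] OF] [Algebra ℤ_[p] F] [IsScalarTower ℤ_[p] ℚ_[p] F]
    [IsScalarTower ℤ_[p] OF F] [IsIntegralClosure OF ℤ_[p] F]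
    {n : ℕ} (β : Matrix (Fin n) (Fin n) OF)
    (hmin : (Matrix.charpoly β).map (residue OF) =
      minpoly (ResidueField OF) (β.map (residue OF)))
    (X : Matrix (Fin n) (Fin n) OF) :
    X * β = β * X ↔ X ∈ Algebra.adjoin OF {β} := by
  classical
  constructor
  · intro hXβ
    set k := ResidueField OF
    set B : Matrix (Fin n) (Fin n) k := β.map (residue OF) with hB
    have hdeg : (minpoly k B).natDegree = n := by
      rw [← hmin, (Matrix.charpoly_monic β).natDegree_map, Matrix.charpoly_natDegree_eq_dim,
        Fintype.card_fin]
    obtain ⟨w, hw⟩ := exists_unit_det_powers B hdeg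
    obtain ⟨v, hv⟩ : ∃ v : Fin n → OF, (residue OF) ∘ v = w :=
      ⟨fun i => Function.surjInv residue_surjective (w i),
       funext fun i => Function.surjInv_eq _ _⟩
    have hpow : ∀ i : ℕ, (β ^ i).map (residue OF) = B ^ i := by
      intro i
      rw [hB, ← RingHom.mapMatrix_apply, ← RingHom.mapMatrix_apply, map_pow]
    set P : Matrix (Fin n) (Fin n) OF :=
      Matrix.of (fun i r : Fin n => ((β ^ (i : ℕ)) *ᵥ v) r) with hP
    have hPmap : P.map (residue OF) = Matrix.of fun i r : Fin n => ((B ^ (i : ℕ)) *ᵥ w) r := by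
      ext i r
      simp only [Matrix.map_apply, hP, Matrix.of_apply, Matrix.mulVec, dotProduct,
        map_sum, _root_.map_mul]
      refine Finset.sum_congr rfl fun j _ => ?_
      rw [← hpow i, Matrix.map_apply, ← congrFun hv j]
      rfl
    have hPdet : IsUnit P.det := by
      by_contra hnu
      have hmem : P.det ∈ maximalIdeal OF := hnu
      have h0 : residue OF P.det = 0 := Ideal.Quotient.eq_zero_iff_mem.mpr hmem
      have hdet : (P.map (residue OF)).det = residue OF P.det := by
        rw [← RingHom.mapMatrix_apply]; exact (RingHom.map_det _ _).symm
      have hu1 := (Matrix.isUnit_iff_isUnit_det _).mp (hPmap ▸ hw)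
      rw [hdet, h0] at hu1
      exact hu1.ne_zero rfl
    have hPTdet : IsUnit Pᵀ.det := by rwa [Matrix.det_transpose]
    set c : Fin n → OF := (Pᵀ)⁻¹ *ᵥ (X *ᵥ v) with hcdef
    have hPc : Pᵀ *ᵥ c = X *ᵥ v := by
      rw [hcdef, Matrix.mulVec_mulVec, Matrix.mul_nonsing_inv _ hPTdet, Matrix.one_mulVec]
    set Y : Matrix (Fin n) (Fin n) OF := ∑ i : Fin n, c i • β ^ (i : ℕ) with hY
    have hYv : Y *ᵥ v = X *ᵥ v := by
      rw [← hPc, hY, sum_mulVec']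
      funext r
      simp only [Finset.sum_apply, Matrix.smul_mulVec, Pi.smul_apply, smul_eq_mul,
        Matrix.mulVec, dotProduct, Matrix.transpose_apply, hP, Matrix.of_apply]
      exact Finset.sum_congr rfl fun i _ => mul_comm _ _
    have hcomX : ∀ i : ℕ, X * β ^ i = β ^ i * X := fun i =>
      (show Commute X β from hXβ).pow_right i
    have hcomY : ∀ i : ℕ, Y * β ^ i = β ^ i * Y := by
      intro i
      rw [hY, Finset.sum_mul, Finset.mul_sum]
      refine Finset.sum_congr rfl fun j _ => ?_
      rw [smul_mul_assoc, mul_smul_comm, ← pow_add, ← pow_add, Nat.add_comm]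
    have hXY' : ∀ i : ℕ, X *ᵥ (β ^ i *ᵥ v) = Y *ᵥ (β ^ i *ᵥ v) := by
      intro i
      rw [Matrix.mulVec_mulVec, Matrix.mulVec_mulVec, hcomX, hcomY,
        ← Matrix.mulVec_mulVec, ← Matrix.mulVec_mulVec, hYv]
    have key : P * Xᵀ = P * Yᵀ := by
      ext i r
      have h1 : (P * Xᵀ) i r = (X *ᵥ (β ^ (i : ℕ) *ᵥ v)) r := by
        simp only [Matrix.mul_apply, Matrix.transpose_apply, hP, Matrix.of_apply,
          Matrix.mulVec, dotProduct]
        exact Finset.sum_congr rfl fun kk _ => mul_comm _ _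
      have h2 : (P * Yᵀ) i r = (Y *ᵥ (β ^ (i : ℕ) *ᵥ v)) r := by
        simp only [Matrix.mul_apply, Matrix.transpose_apply, hP, Matrix.of_apply,
          Matrix.mulVec, dotProduct]
        exact Finset.sum_congr rfl fun kk _ => mul_comm _ _
      rw [h1, h2, hXY']
    have hXt : Xᵀ = Yᵀ := by
      have h2 := congrArg (fun M => P⁻¹ * M) key
      simpa [← Matrix.mul_assoc, Matrix.nonsing_inv_mul _ hPdet] using h2
    have hXY : X = Y := by
      have h3 := congrArg Matrix.transpose hXt
      simpa using h3
    rw [hXY, hY]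
    exact Subalgebra.sum_mem _ fun i _ =>
      Subalgebra.smul_mem _ (pow_mem (Algebra.self_mem_adjoin_singleton OF β) _) _
  · intro hX
    rw [Algebra.adjoin_singleton_eq_range_aeval] at hX
    obtain ⟨g, hg⟩ := hX
    rw [← hg]
    calc (aeval β) g * β = aeval β (g * Polynomial.X) := by rw [_root_.map_mul, Polynomial.aeval_X]
      _ = aeval β (Polynomial.X * g) := by rw [mul_comm]
      _ = β * (aeval β) g := by rw [_root_.map_mul, Polynomial.aeval_X]
end

section
/- Let β ∈ M_n(O_F) be such that the reduction modulo 𝔭_F of its characteristic polynomial χ_β(t) = det(t·1_n − β) is the minimal polynomial over 𝔽 of the reduction β̄ ∈ M_n(𝔽). Then for every integer m > 0, letting β_m ∈ M_n(O_F/𝔭_F^m) denote the reduction of β modulo 𝔭_F^m, one has {X ∈ M_n(O_F/𝔭_F^m) : Xβ_m = β_m X} = (O_F/𝔭_F^m)[β_m], the subalgebra of M_n(O_F/𝔭_F^m) generated by β_m over O_F/𝔭_F^m. -/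
/-!
STATEMENT 4: Let `β ∈ M_n(O_F)` be such that the reduction modulo `𝔭_F` of its
characteristic polynomial is the minimal polynomial over `𝔽` of `β̄ ∈ M_n(𝔽)`. Then for
every integer `m > 0`, writing `β_m ∈ M_n(O_F/𝔭_F^m)` for the reduction of `β` modulo
`𝔭_F^m`, one has `{X ∈ M_n(O_F/𝔭_F^m) : Xβ_m = β_m X} = (O_F/𝔭_F^m)[β_m]`.

Context: `p` odd prime, `F/ℚ_p` finite with ring of integers `OF`, maximal ideal `𝔭_F`
and residue field `𝔽 = ResidueField OF`.
-/

open Polynomial DirectSum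

universe u




lemma exists_order_eq_minpoly {K V : Type u} [Field K] [AddCommGroup V] [Module K V]
    [FiniteDimensional K V] (f : Module.End K V) :
    ∃ v : V, ∀ q : K[X], (aeval f q) v = 0 → minpoly K f ∣ q := by
  classical
  have hfi : IsIntegral K f := Algebra.IsIntegral.isIntegral f
  have hμ0 : minpoly K f ≠ 0 := minpoly.ne_zero hfi
  have htor : Module.IsTorsion K[X] (Module.AEval' f) := by
    intro x
    refine ⟨⟨minpoly K f, mem_nonZeroDivisors_of_ne_zero hμ0⟩, ?_⟩
    show (minpoly K f) • x = 0
    apply (Module.AEval.of K V f).symm.injective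
    rw [Module.AEval.of_symm_smul]
    simp [minpoly.aeval]
  obtain ⟨ι, hι, P, hP, e, ⟨eq⟩⟩ := Module.equiv_directSum_of_isTorsion.{u,u} htor
  haveI := hι
  set G := fun i : ι => K[X] ⧸ (K[X] ∙ P i ^ e i) with hG
  set Z : ⨁ i, G i :=
    ∑ j, DirectSum.lof K[X] ι G j (Submodule.Quotient.mk 1) with hZ
  refine ⟨(Module.AEval.of K V f).symm (eq.symm Z), fun q hq => ?_⟩
  -- step 1 : q • Z = 0
  have h1 : q • Z = 0 := by
    have : q • eq.symm Z = 0 := by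
      apply (Module.AEval.of K V f).symm.injective
      rw [Module.AEval.of_symm_smul, map_zero]
      exact hq
    have := congrArg eq this
    rwa [map_smul, LinearEquiv.apply_symm_apply, map_zero] at this
  -- step 2 : each P i ^ e i divides q
  have h2 : ∀ i, P i ^ e i ∣ q := by
    intro i
    have := congrArg (DirectSum.component K[X] ι G i) h1
    rw [map_smul, map_zero, hZ, map_sum] at this
    rw [Finset.sum_eq_single i (fun j _ hj => by
        rw [DirectSum.component.of, dif_neg hj])
      (fun h => absurd (Finset.mem_univ i) h)] at this
    rw [DirectSum.component.lof_self] at this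
    rw [← Submodule.Quotient.mk_smul, smul_eq_mul, mul_one,
      Submodule.Quotient.mk_eq_zero, Submodule.mem_span_singleton] at this
    obtain ⟨a, ha⟩ := this
    exact ⟨a, by rw [← ha, smul_eq_mul, mul_comm]⟩
  -- step 3 : q annihilates everything, hence minpoly ∣ q
  have h3 : aeval f q = 0 := by
    ext w
    have : q • (eq (Module.AEval.of K V f w)) = 0 := by
      refine DFinsupp.ext fun i => ?_
      rw [DirectSum.smul_apply, DFinsupp.zero_apply]
      obtain ⟨y, hy⟩ := Submodule.Quotient.mk_surjective _ ((eq (Module.AEval.of K V f w)) i)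
      rw [← hy, ← Submodule.Quotient.mk_smul, Submodule.Quotient.mk_eq_zero]
      obtain ⟨a, ha⟩ := h2 i
      exact Submodule.mem_span_singleton.2 ⟨a * y, by
        rw [smul_eq_mul, smul_eq_mul, ha]; ring⟩
    have := congrArg eq.symm this
    rw [map_smul, LinearEquiv.symm_apply_apply, map_zero] at this
    have := congrArg (Module.AEval.of K V f).symm this
    rw [Module.AEval.of_symm_smul, map_zero, LinearEquiv.symm_apply_apply] at this
    simpa using this
  exact minpoly.dvd K f h3

lemma end_commutant {K V : Type u} [Field K] [AddCommGroup V] [Module K V]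
    [FiniteDimensional K V] (f g : Module.End K V)
    (hdeg : (minpoly K f).natDegree = Module.finrank K V)
    (hcomm : g * f = f * g) : ∃ p : K[X], g = aeval f p := by
  classical
  set n := Module.finrank K V with hn
  rcases Nat.eq_zero_or_pos n with h0 | hpos
  · have : Subsingleton V := by
      rw [← Module.finrank_zero_iff (R := K)]; omega
    exact ⟨0, LinearMap.ext fun w => Subsingleton.elim _ _⟩
  haveI : Nonempty (Fin n) := ⟨⟨0, hpos⟩⟩
  obtain ⟨v, hv⟩ := exists_order_eq_minpoly f
  have keyeval : ∀ c : Fin n → K, ∀ w : V,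
      aeval f (∑ i : Fin n, C (c i) * X ^ (i : ℕ)) w = ∑ i : Fin n, c i • (f ^ (i : ℕ)) w := by
    intro c w
    rw [map_sum, LinearMap.sum_apply]
    refine Finset.sum_congr rfl fun i _ => ?_
    rw [map_mul, aeval_C, aeval_X_pow, Module.End.mul_apply,
      Module.algebraMap_end_apply]
  have li : LinearIndependent K (fun i : Fin n => (f ^ (i : ℕ)) v) := by
    rw [Fintype.linearIndependent_iff]
    intro c hc
    by_contra hcn
    push_neg at hcn
    obtain ⟨i₀, hi₀⟩ := hcn
    set q : K[X] := ∑ i : Fin n, C (c i) * X ^ (i : ℕ) with hq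
    have hq0 : q ≠ 0 := by
      intro h
      apply hi₀
      have := congrArg (fun r => Polynomial.coeff r (i₀ : ℕ)) h
      simp only [hq, Polynomial.finset_sum_coeff, coeff_C_mul, coeff_X_pow,
        Polynomial.coeff_zero] at this
      rwa [Finset.sum_eq_single i₀ (fun j _ hj => by
          rw [if_neg (by simpa [Fin.val_eq_val] using Ne.symm hj), mul_zero])
        (fun h => absurd (Finset.mem_univ i₀) h), if_pos rfl, mul_one] at this
    have hdvd : minpoly K f ∣ q := hv q (by rw [keyeval]; exact hc)
    have h1 : n ≤ q.natDegree := hdeg ▸ Polynomial.natDegree_le_of_dvd hdvd hq0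
    have h2 : q.natDegree ≤ n - 1 := by
      refine Polynomial.natDegree_sum_le_of_forall_le _ _ fun i _ => ?_
      refine le_trans (Polynomial.natDegree_C_mul_le _ _) ?_
      rw [Polynomial.natDegree_X_pow]
      omega
    omega
  have hcard : Fintype.card (Fin n) = Module.finrank K V := by simp [hn]
  set b := basisOfLinearIndependentOfCardEqFinrank li hcard with hb
  have hbi : ∀ i : Fin n, b i = (f ^ (i : ℕ)) v := fun i => by
    rw [hb, coe_basisOfLinearIndependentOfCardEqFinrank]
  set p : K[X] := ∑ i : Fin n, C (b.repr (g v) i) * X ^ (i : ℕ) with hp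
  have hpv : aeval f p v = g v := by
    rw [keyeval]
    conv_rhs => rw [← Module.Basis.sum_repr b (g v)]
    exact Finset.sum_congr rfl fun i _ => by rw [hbi]
  refine ⟨p, b.ext fun i => ?_⟩
  have hgf : g * f ^ (i : ℕ) = f ^ (i : ℕ) * g :=
    (Commute.pow_right (hcomm) (i : ℕ))
  have hpf : aeval f p * f ^ (i : ℕ) = f ^ (i : ℕ) * aeval f p := by
    have h := congrArg (aeval f) (mul_comm p (X ^ (i : ℕ)))
    rw [map_mul, map_mul, aeval_X_pow] at h
    exact h
  calc g (b i) = (g * f ^ (i : ℕ)) v := by rw [hbi]; rfl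
    _ = (f ^ (i : ℕ) * g) v := by rw [hgf]
    _ = (f ^ (i : ℕ)) (aeval f p v) := by rw [hpv]; rfl
    _ = (aeval f p * f ^ (i : ℕ)) v := by rw [hpf]; rfl
    _ = aeval f p (b i) := by rw [hbi]; rfl

lemma matrix_commutant {K : Type u} [Field K] {n : ℕ} (B : Matrix (Fin n) (Fin n) K)
    (h : B.charpoly = minpoly K B) (Y : Matrix (Fin n) (Fin n) K)
    (hcomm : Y * B = B * Y) : ∃ p : K[X], Y = aeval B p := by
  classical
  set e := Matrix.toLinAlgEquiv' (R := K) (n := Fin n) with he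
  have hdeg : (minpoly K (e B)).natDegree = Module.finrank K (Fin n → K) := by
    rw [minpoly.algEquiv_eq e B, ← h, Matrix.charpoly_natDegree_eq_dim,
      Fintype.card_fin, Module.finrank_fin_fun]
  obtain ⟨p, hp⟩ := end_commutant (e B) (e Y) hdeg (by rw [← map_mul, ← map_mul, hcomm])
  refine ⟨p, e.injective ?_⟩
  rw [hp, aeval_algHom_apply e B p]

lemma map_aeval_mk {R : Type u} [CommRing R] (I : Ideal R) {n : ℕ}
    (B : Matrix (Fin n) (Fin n) R) (q : R[X]) :
    (aeval B q).map (Ideal.Quotient.mk I) =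
      aeval (B.map (Ideal.Quotient.mk I)) (q.map (Ideal.Quotient.mk I)) := by
  have h := aeval_algHom_apply ((Ideal.Quotient.mkₐ R I).mapMatrix) B q
  simp only [AlgHom.mapMatrix_apply, Ideal.Quotient.mkₐ_eq_mk] at h
  have h2 : (q.map (Ideal.Quotient.mk I)) = q.map (algebraMap R (R ⧸ I)) := by
    rw [Ideal.Quotient.algebraMap_eq]
  rw [h2, aeval_map_algebraMap]
  exact h.symm

lemma main_ind {R : Type u} [CommRing R] [IsDomain R] [IsDiscreteValuationRing R] {n : ℕ}
    (β : Matrix (Fin n) (Fin n) R)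
    (hmin : (Matrix.charpoly β).map (IsLocalRing.residue R) =
      minpoly (IsLocalRing.ResidueField R) (β.map (IsLocalRing.residue R))) :
    ∀ m : ℕ, ∀ X : Matrix (Fin n) (Fin n) (R ⧸ IsLocalRing.maximalIdeal R ^ m),
      X * β.map (Ideal.Quotient.mk (IsLocalRing.maximalIdeal R ^ m)) =
        β.map (Ideal.Quotient.mk (IsLocalRing.maximalIdeal R ^ m)) * X →
      ∃ q : R[X], X = (aeval β q).map (Ideal.Quotient.mk (IsLocalRing.maximalIdeal R ^ m)) := by
  classical
  obtain ⟨π, hπ⟩ := IsDiscreteValuationRing.exists_irreducible R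
  have hspan : IsLocalRing.maximalIdeal R = Ideal.span {π} := hπ.maximalIdeal_eq
  have hres_eq : ⇑(IsLocalRing.residue R) =
      ⇑(Ideal.Quotient.mk (IsLocalRing.maximalIdeal R)) := rfl
  intro m
  induction m with
  | zero =>
    intro X _
    have htop : (IsLocalRing.maximalIdeal R ^ 0 : Ideal R) = ⊤ := by simp
    haveI : Subsingleton (R ⧸ IsLocalRing.maximalIdeal R ^ 0) :=
      Ideal.Quotient.subsingleton_iff.mpr htop
    exact ⟨0, Subsingleton.elim _ _⟩
  | succ m IH =>
    set I1 := IsLocalRing.maximalIdeal R ^ (m + 1) with hI1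
    set I0 := IsLocalRing.maximalIdeal R ^ m with hI0
    have hle : I1 ≤ I0 := Ideal.pow_le_pow_right (Nat.le_succ m)
    set φ := Ideal.Quotient.factor hle with hφ
    have hfac : ∀ M : Matrix (Fin n) (Fin n) R,
        (M.map (Ideal.Quotient.mk I1)).map φ = M.map (Ideal.Quotient.mk I0) := by
      intro M
      ext i j
      simp only [Matrix.map_apply]
      exact Ideal.Quotient.factor_mk hle (M i j)
    have hmapsub : ∀ M N : Matrix (Fin n) (Fin n) (R ⧸ I1),
        (M - N).map φ = M.map φ - N.map φ :=
      fun M N => Matrix.map_sub _ (fun a b => map_sub φ a b) M N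
    have hmapsubR : ∀ M N : Matrix (Fin n) (Fin n) R,
        (M - N).map (Ideal.Quotient.mk I1) =
          M.map (Ideal.Quotient.mk I1) - N.map (Ideal.Quotient.mk I1) :=
      fun M N => Matrix.map_sub _ (fun a b => map_sub _ a b) M N
    intro X hX
    -- reduce mod I0 and apply IH
    have h1 : (X.map φ) * β.map (Ideal.Quotient.mk I0) =
        β.map (Ideal.Quotient.mk I0) * (X.map φ) := by
      rw [← hfac β, ← Matrix.map_mul, ← Matrix.map_mul, hX]
    obtain ⟨q, hq⟩ := IH (X.map φ) h1
    set A := (aeval β q).map (Ideal.Quotient.mk I1) with hA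
    set Y := X - A with hY
    set B1 := β.map (Ideal.Quotient.mk I1) with hB1
    have haec : aeval β q * β = β * aeval β q := by
      have h := congrArg (aeval β) (mul_comm q (Polynomial.X : R[X]))
      rw [map_mul, map_mul, aeval_X] at h
      exact h
    have hAcomm : A * B1 = B1 * A := by
      rw [hA, hB1, ← Matrix.map_mul, ← Matrix.map_mul, haec]
    have hYcomm : Y * B1 = B1 * Y := by
      rw [hY, sub_mul, mul_sub, hX, hAcomm]
    -- Y is divisible by π^m entrywise
    have hYent : ∀ i j, ∃ c : R, Y i j = Ideal.Quotient.mk I1 (π ^ m * c) := by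
      intro i j
      obtain ⟨y, hy⟩ := Ideal.Quotient.mk_surjective (Y i j)
      have hY0 : Y.map φ = 0 := by
        rw [hY, hmapsub, hA, hfac, hq]
        exact sub_self _
      have hφy : φ (Y i j) = 0 := congrFun (congrFun hY0 i) j
      have hy0 : Ideal.Quotient.mk I0 y = 0 := by
        rw [← Ideal.Quotient.factor_mk hle y, hy]
        exact hφy
      have hymem : y ∈ I0 := Ideal.Quotient.eq_zero_iff_mem.mp hy0
      rw [hI0, hspan, Ideal.span_singleton_pow, Ideal.mem_span_singleton] at hymem
      obtain ⟨c, hc⟩ := hymem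
      exact ⟨c, by rw [← hc, hy]⟩
    set C : Matrix (Fin n) (Fin n) R := Matrix.of fun i j => (hYent i j).choose with hC
    have hYC : Y = (π ^ m • C).map (Ideal.Quotient.mk I1) := by
      ext i j
      rw [Matrix.map_apply, Matrix.smul_apply, smul_eq_mul]
      exact (hYent i j).choose_spec
    -- the commutator of C with β has entries in 𝔪
    have hsmul_eq : (π ^ m • C) * β - β * (π ^ m • C) = π ^ m • (C * β - β * C) := by
      rw [smul_sub, smul_mul_assoc, mul_smul_comm]
    have hcomm0 : (π ^ m • (C * β - β * C)).map (Ideal.Quotient.mk I1) = 0 := by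
      rw [← hsmul_eq, hmapsubR, Matrix.map_mul, Matrix.map_mul, ← hYC, ← hB1, hYcomm]
      exact sub_self _
    have hδ : ∀ i j, (C * β - β * C) i j ∈ IsLocalRing.maximalIdeal R := by
      intro i j
      have h0 : Ideal.Quotient.mk I1 (π ^ m * ((C * β - β * C) i j)) = 0 := by
        have := congrFun (congrFun hcomm0 i) j
        rwa [Matrix.map_apply, Matrix.smul_apply, smul_eq_mul] at this
      have hmem : π ^ m * ((C * β - β * C) i j) ∈ I1 :=
        Ideal.Quotient.eq_zero_iff_mem.mp h0
      rw [hI1, hspan, Ideal.span_singleton_pow, Ideal.mem_span_singleton] at hmem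
      obtain ⟨t, ht⟩ := hmem
      have hCB : (C * β - β * C) i j = π * t := by
        apply mul_left_cancel₀ (pow_ne_zero m hπ.ne_zero)
        rw [ht]; ring
      rw [hspan, Ideal.mem_span_singleton, hCB]
      exact ⟨t, rfl⟩
    -- field case over the residue field
    have hch : (β.map (IsLocalRing.residue R)).charpoly =
        minpoly (IsLocalRing.ResidueField R) (β.map (IsLocalRing.residue R)) := by
      rw [Matrix.charpoly_map]; exact hmin
    have hCcomm : (C.map (IsLocalRing.residue R)) * (β.map (IsLocalRing.residue R)) =
        (β.map (IsLocalRing.residue R)) * (C.map (IsLocalRing.residue R)) := by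
      rw [← Matrix.map_mul, ← Matrix.map_mul]
      have hz : (C * β - β * C).map (IsLocalRing.residue R) = 0 := by
        ext i j
        rw [Matrix.map_apply]
        exact Ideal.Quotient.eq_zero_iff_mem.mpr (hδ i j)
      rw [Matrix.map_sub _ (fun a b => map_sub (IsLocalRing.residue R) a b)] at hz
      rw [← sub_eq_zero]
      exact hz
    obtain ⟨pr, hpr⟩ := matrix_commutant (β.map (IsLocalRing.residue R)) hch
      (C.map (IsLocalRing.residue R)) hCcomm
    obtain ⟨r, hr⟩ := Polynomial.map_surjective (IsLocalRing.residue R)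
      Ideal.Quotient.mk_surjective pr
    -- C ≡ aeval β r mod 𝔪
    have hCr : ∀ i j, (C - aeval β r) i j ∈ IsLocalRing.maximalIdeal R := by
      intro i j
      have hz : (C - aeval β r).map (IsLocalRing.residue R) = 0 := by
        rw [Matrix.map_sub _ (fun a b => map_sub (IsLocalRing.residue R) a b)]
        have hres : (aeval β r).map (IsLocalRing.residue R) =
            aeval (β.map (IsLocalRing.residue R)) (r.map (IsLocalRing.residue R)) := by
          rw [hres_eq]
          exact map_aeval_mk _ β r
        rw [hres, hr, ← hpr]
        exact sub_self _
      have := congrFun (congrFun hz i) j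
      rw [Matrix.map_apply] at this
      exact Ideal.Quotient.eq_zero_iff_mem.mp this
    -- conclude
    have hfin : (π ^ m • C).map (Ideal.Quotient.mk I1) =
        (π ^ m • aeval β r).map (Ideal.Quotient.mk I1) := by
      ext i j
      rw [Matrix.map_apply, Matrix.map_apply, Matrix.smul_apply, Matrix.smul_apply,
        smul_eq_mul, smul_eq_mul, Ideal.Quotient.mk_eq_mk_iff_sub_mem, ← mul_sub]
      obtain ⟨t, ht⟩ := Ideal.mem_span_singleton.mp (hspan ▸ hCr i j)
      rw [hI1, hspan, Ideal.span_singleton_pow, Ideal.mem_span_singleton]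
      refine ⟨t, ?_⟩
      have hsub : C i j - (aeval β r) i j = (C - aeval β r) i j := by
        rw [Matrix.sub_apply]
      rw [hsub, ht]; ring
    refine ⟨Polynomial.C (π ^ m) * r + q, ?_⟩
    have hsm : aeval β (Polynomial.C (π ^ m) * r) = π ^ m • aeval β r := by
      rw [map_mul, aeval_C, Algebra.smul_def]
    have hXYA : X = Y + A := by rw [hY]; abel
    have hrhs : (aeval β (Polynomial.C (π ^ m) * r + q)).map (Ideal.Quotient.mk I1) =
        (π ^ m • aeval β r).map (Ideal.Quotient.mk I1) + A := by
      rw [map_add, Matrix.map_add _ (fun a b => map_add (Ideal.Quotient.mk I1) a b), hsm, hA]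
    rw [hXYA, hrhs, ← hfin, ← hYC]

open IsLocalRing

theorem commutant_mod_pow_eq_adjoin_of_charpoly_mod_eq_minpoly
    {p : ℕ} [Fact (Nat.Prime p)] (hp : p ≠ 2)
    {F : Type*} [Field F] [Algebra ℚ_[p] F] [FiniteDimensional ℚ_[p] F]
    {OF : Type*} [CommRing OF] [IsDomain OF] [IsDiscreteValuationRing OF]
    [Algebra OF F] [IsFractionRing OF F]
    [Algebra ℤ_[p] OF] [Algebra ℤ_[p] F] [IsScalarTower ℤ_[p] ℚ_[p] F]
    [IsScalarTower ℤ_[p] OF F] [IsIntegralClosure OF ℤ_[p] F]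
    {n : ℕ} (β : Matrix (Fin n) (Fin n) OF)
    (hmin : (Matrix.charpoly β).map (residue OF) =
      minpoly (ResidueField OF) (β.map (residue OF)))
    (m : ℕ) (hm : 0 < m)
    (X : Matrix (Fin n) (Fin n) (OF ⧸ maximalIdeal OF ^ m)) :
    X * β.map (Ideal.Quotient.mk (maximalIdeal OF ^ m)) =
        β.map (Ideal.Quotient.mk (maximalIdeal OF ^ m)) * X ↔
      X ∈ Algebra.adjoin (OF ⧸ maximalIdeal OF ^ m)
        {β.map (Ideal.Quotient.mk (maximalIdeal OF ^ m))} := by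
  constructor
  · intro hX
    obtain ⟨q, hq⟩ := main_ind β hmin m X hX
    rw [hq, map_aeval_mk]
    rw [Algebra.adjoin_singleton_eq_range_aeval]
    exact (AlgHom.mem_range _).mpr ⟨_, rfl⟩
  · intro hX
    rw [Algebra.adjoin_singleton_eq_range_aeval] at hX
    obtain ⟨ppoly, hp⟩ := (AlgHom.mem_range _).mp hX
    rw [← hp]
    have h := congrArg (Polynomial.aeval (β.map (Ideal.Quotient.mk (maximalIdeal OF ^ m))))
      (mul_comm ppoly Polynomial.X)
    rw [map_mul, map_mul, Polynomial.aeval_X] at h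
    exact h
end

section
/- Let β ∈ M_n(O_F) have characteristic polynomial χ_β(t) = t^n − a_n t^{n−1} − ⋯ − a_2 t − a_1, and assume that the reduction of χ_β(t) modulo 𝔭_F is the minimal polynomial over 𝔽 of the reduction β̄ ∈ M_n(𝔽). Then there exists g ∈ GL_n(O_F) such that g β g^{−1} is the companion matrix whose first n−1 columns are the standard basis vectors shifted down by one (i.e., subdiagonal entries equal to 1, all other entries of the first n−1 columns zero) and whose last column is (a_1, a_2, …, a_n)^T. -/
/-!
STATEMENT 5: Let `β ∈ M_n(O_F)` have characteristic polynomial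
`χ_β(t) = t^n − a_n t^{n−1} − ⋯ − a_2 t − a_1` (rendered here with 0-based indexing:
`χ_β = X^n − Σ_{i} C (a i) * X^i` with `a i = a_{i+1}`), and assume the reduction of
`χ_β(t)` modulo `𝔭_F` is the minimal polynomial over `𝔽` of `β̄ ∈ M_n(𝔽)`. Then there
is `g ∈ GL_n(O_F)` such that `g β g⁻¹` is the companion matrix with subdiagonal entries
`1`, last column `(a_1, …, a_n)^T`, and all other entries `0`.

Context: `p` odd prime, `F/ℚ_p` finite with ring of integers `OF`, maximal ideal `𝔭_F`
and residue field `𝔽 = ResidueField OF`.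
-/

open IsLocalRing

open Polynomial Module Matrix

universe u

lemma exists_vector_minpoly_dvd {K : Type u} [Field K] {V : Type u} [AddCommGroup V]
    [Module K V] [FiniteDimensional K V] (f : V →ₗ[K] V) :
    ∃ v : V, ∀ q : K[X], (aeval f q) v = 0 → minpoly K f ∣ q := by
  classical
  have hfi : IsIntegral K f := Algebra.IsIntegral.isIntegral f
  have hm0 : minpoly K f ≠ 0 := minpoly.ne_zero hfi
  have htor : Module.IsTorsion K[X] (Module.AEval' f) := by
    intro m
    refine ⟨⟨minpoly K f, mem_nonZeroDivisors_of_ne_zero hm0⟩, ?_⟩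
    apply (Module.AEval.of K V f).symm.injective
    show (Module.AEval.of K V f).symm ((minpoly K f) • m) = (Module.AEval.of K V f).symm 0
    rw [Module.AEval.of_symm_smul, minpoly.aeval, map_zero]
    simp [Module.End.smul_def]
  obtain ⟨ι, _, P, hP, e, ⟨l⟩⟩ := Module.equiv_directSum_of_isTorsion.{u, u} htor
  let w : DirectSum ι fun i => K[X] ⧸ (K[X] ∙ P i ^ e i) :=
    ∑ i : ι, DirectSum.of (fun i => K[X] ⧸ (K[X] ∙ P i ^ e i)) i (Submodule.Quotient.mk 1)
  refine ⟨(Module.AEval.of K V f).symm (l.symm w), fun q hq => ?_⟩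
  have h1 : q • (l.symm w) = 0 := by
    apply (Module.AEval.of K V f).symm.injective
    rw [Module.AEval.of_symm_smul, map_zero, Module.End.smul_def]
    exact hq
  have h2 : q • w = 0 := by
    have := congrArg l h1
    rwa [_root_.map_smul, l.apply_symm_apply, map_zero] at this
  have hdvd : ∀ i, P i ^ e i ∣ q := by
    intro i
    have h3 : (q • w) i = 0 := by rw [h2]; rfl
    rw [DirectSum.smul_apply] at h3
    have hw : w i = Submodule.Quotient.mk 1 := by
      show (∑ j : ι, DirectSum.of (fun i => K[X] ⧸ (K[X] ∙ P i ^ e i)) j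
        (Submodule.Quotient.mk 1)) i = _
      rw [DFinsupp.finset_sum_apply, Finset.sum_eq_single i]
      · exact DirectSum.of_eq_same i _
      · intro b _ hb; exact DirectSum.of_eq_of_ne _ _ _ hb.symm
      · intro h; exact absurd (Finset.mem_univ i) h
    rw [hw, ← Submodule.Quotient.mk_smul, smul_eq_mul, mul_one,
      Submodule.Quotient.mk_eq_zero, Submodule.mem_span_singleton] at h3
    obtain ⟨c, hc⟩ := h3
    exact ⟨c, by rw [← hc, smul_eq_mul]; ring⟩
  have hkill : ∀ (i : ι) (x : K[X] ⧸ (K[X] ∙ P i ^ e i)), q • x = 0 := by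
    intro i x
    obtain ⟨r, rfl⟩ := Submodule.Quotient.mk_surjective _ x
    rw [← Submodule.Quotient.mk_smul, Submodule.Quotient.mk_eq_zero]
    obtain ⟨c, hc⟩ := hdvd i
    rw [smul_eq_mul, hc, Submodule.mem_span_singleton]
    exact ⟨c * r, by rw [smul_eq_mul]; ring⟩
  have hann : aeval f q = 0 := by
    apply LinearMap.ext; intro u
    have hz : q • (l ((Module.AEval.of K V f) u)) = 0 := by
      refine DFinsupp.ext fun i => ?_
      rw [DirectSum.smul_apply, hkill]
      rfl
    have hz2 : q • ((Module.AEval.of K V f) u) = 0 := by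
      have := congrArg l.symm hz
      rwa [_root_.map_smul, l.symm_apply_apply, map_zero] at this
    have := congrArg (Module.AEval.of K V f).symm hz2
    rw [Module.AEval.of_symm_smul, map_zero, Module.End.smul_def] at this
    simpa using this
  exact minpoly.dvd K f hann

lemma exists_cyclic_vector {K : Type u} [Field K] {n : ℕ} (hn : 0 < n)
    (A : Matrix (Fin n) (Fin n) K) (h : (minpoly K A).natDegree = n) :
    ∃ v : Fin n → K, LinearIndependent K (fun j : Fin n => (A ^ (j : ℕ)) *ᵥ v) := by
  classical
  obtain ⟨v, hv⟩ := exists_vector_minpoly_dvd (Matrix.toLin' A)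
  refine ⟨v, ?_⟩
  rw [Fintype.linearIndependent_iff]
  intro c hc
  set q : K[X] := ∑ j : Fin n, C (c j) * X ^ (j : ℕ) with hqdef
  have hterm : ∀ j : Fin n, (aeval (Matrix.toLin' A) (C (c j) * X ^ (j : ℕ))) v
      = c j • ((A ^ (j : ℕ)) *ᵥ v) := by
    intro j
    rw [_root_.map_mul, aeval_C, aeval_X_pow, ← Algebra.smul_def, LinearMap.smul_apply]
    congr 1
    have : Matrix.toLin' A ^ (j : ℕ) = Matrix.toLin' (A ^ (j : ℕ)) := by
      exact (map_pow (Matrix.toLinAlgEquiv' : Matrix (Fin n) (Fin n) K ≃ₐ[K] _) A (j : ℕ)).symm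
    rw [this, Matrix.toLin'_apply]
  have hq : (aeval (Matrix.toLin' A) q) v = 0 := by
    rw [hqdef, map_sum, LinearMap.sum_apply, ← hc]
    exact Finset.sum_congr rfl fun j _ => hterm j
  have hdvd : minpoly K A ∣ q := by
    rw [← Matrix.minpoly_toLin']
    exact hv q hq
  have hq0 : q = 0 := by
    by_contra h0
    have hle : q.natDegree ≤ n - 1 := by
      rw [hqdef]
      refine Polynomial.natDegree_sum_le_of_forall_le _ _ fun j _ => ?_
      refine le_trans (Polynomial.natDegree_C_mul_le _ _) ?_
      rw [Polynomial.natDegree_X_pow]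
      omega
    have := Polynomial.natDegree_le_of_dvd hdvd h0
    omega
  intro j
  have hco := congrArg (fun p => Polynomial.coeff p (j : ℕ)) hq0
  simp only [hqdef, Polynomial.finset_sum_coeff, Polynomial.coeff_C_mul,
    Polynomial.coeff_X_pow, Polynomial.coeff_zero] at hco
  rw [Finset.sum_eq_single j] at hco
  · simpa using hco
  · intro b _ hb
    rw [if_neg (fun hE => hb (Fin.ext hE.symm)), mul_zero]
  · intro hj; exact absurd (Finset.mem_univ j) hj

theorem conjugate_to_companion_of_charpoly_mod_eq_minpoly
    {p : ℕ} [Fact (Nat.Prime p)] (hp : p ≠ 2)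
    {F : Type*} [Field F] [Algebra ℚ_[p] F] [FiniteDimensional ℚ_[p] F]
    {OF : Type*} [CommRing OF] [IsDomain OF] [IsDiscreteValuationRing OF]
    [Algebra OF F] [IsFractionRing OF F]
    [Algebra ℤ_[p] OF] [Algebra ℤ_[p] F] [IsScalarTower ℤ_[p] ℚ_[p] F]
    [IsScalarTower ℤ_[p] OF F] [IsIntegralClosure OF ℤ_[p] F]
    {n : ℕ} (β : Matrix (Fin n) (Fin n) OF) (a : Fin n → OF)
    (hchar : Matrix.charpoly β =
      Polynomial.X ^ n - ∑ i : Fin n, Polynomial.C (a i) * Polynomial.X ^ (i : ℕ))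
    (hmin : (Matrix.charpoly β).map (residue OF) =
      minpoly (ResidueField OF) (β.map (residue OF))) :
    ∃ g : (Matrix (Fin n) (Fin n) OF)ˣ,
      (g : Matrix (Fin n) (Fin n) OF) * β * ((g⁻¹ : (Matrix (Fin n) (Fin n) OF)ˣ) :
          Matrix (Fin n) (Fin n) OF) =
        Matrix.of fun i j : Fin n =>
          if (j : ℕ) = n - 1 then a i
          else if (i : ℕ) = (j : ℕ) + 1 then 1 else 0 := by
  classical
  rcases Nat.eq_zero_or_pos n with h0 | hn
  · subst h0
    exact ⟨1, by ext i j; exact i.elim0⟩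
  set r : OF →+* ResidueField OF := residue OF with hr
  set βq : Matrix (Fin n) (Fin n) (ResidueField OF) := β.map r with hβq
  -- degree of the minimal polynomial of the reduction
  have hdeg : (minpoly (ResidueField OF) βq).natDegree = n := by
    rw [← hmin, (Matrix.charpoly_monic β).natDegree_map,
      Matrix.charpoly_natDegree_eq_dim, Fintype.card_fin]
  -- cyclic vector
  obtain ⟨v, hind⟩ := exists_cyclic_vector hn βq hdeg
  -- N is invertible
  set N : Matrix (Fin n) (Fin n) (ResidueField OF) :=
    Matrix.of (fun i j : Fin n => ((βq ^ (j : ℕ)) *ᵥ v) i) with hN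
  have hNunit : IsUnit N := by
    rw [← Matrix.linearIndependent_cols_iff_isUnit]
    exact hind
  -- lift v
  have hsurj : Function.Surjective r := Ideal.Quotient.mk_surjective
  choose vt hvt using fun i => hsurj (v i)
  -- the matrix M over OF
  set M : Matrix (Fin n) (Fin n) OF :=
    Matrix.of (fun i j : Fin n => ((β ^ (j : ℕ)) *ᵥ vt) i) with hM
  have hmap : M.map r = N := by
    ext i j
    show r (((β ^ (j : ℕ)) *ᵥ vt) i) = ((βq ^ (j : ℕ)) *ᵥ v) i
    have hpow : (β ^ (j : ℕ)).map r = βq ^ (j : ℕ) := by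
      rw [← RingHom.mapMatrix_apply, map_pow, RingHom.mapMatrix_apply]
    rw [← hpow]
    simp only [Matrix.mulVec, dotProduct, map_sum, _root_.map_mul, Matrix.map_apply]
    exact Finset.sum_congr rfl fun k _ => by rw [hvt]
  have hMunit : IsUnit M := by
    rw [Matrix.isUnit_iff_isUnit_det]
    by_contra hnot
    have hmem : M.det ∈ maximalIdeal OF := hnot
    have hz : r M.det = 0 := Ideal.Quotient.eq_zero_iff_mem.mpr hmem
    rw [RingHom.map_det, RingHom.mapMatrix_apply, hmap] at hz
    have := (Matrix.isUnit_iff_isUnit_det N).mp hNunit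
    rw [hz] at this
    exact one_ne_zero (isUnit_zero_iff.mp this).symm
  -- Cayley–Hamilton
  have hCH : β ^ n = ∑ i : Fin n, a i • β ^ (i : ℕ) := by
    have h0 := Matrix.aeval_self_charpoly β
    rw [hchar, map_sub, map_sum, Polynomial.aeval_X_pow, sub_eq_zero] at h0
    rw [h0]
    exact Finset.sum_congr rfl fun i _ => by
      rw [_root_.map_mul, Polynomial.aeval_C, Polynomial.aeval_X_pow, ← Algebra.smul_def]
  -- the key identity β * M = M * C
  set C : Matrix (Fin n) (Fin n) OF :=
    Matrix.of (fun i j : Fin n =>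
      if (j : ℕ) = n - 1 then a i
      else if (i : ℕ) = (j : ℕ) + 1 then 1 else 0) with hC
  have hkey : β * M = M * C := by
    ext i j
    have hLHS : (β * M) i j = ((β ^ ((j : ℕ) + 1)) *ᵥ vt) i := by
      rw [pow_succ']
      rw [← Matrix.mulVec_mulVec]
      simp only [Matrix.mul_apply, Matrix.mulVec, dotProduct, hM, Matrix.of_apply]
    rw [hLHS]
    by_cases hj : (j : ℕ) = n - 1
    · have hn' : (j : ℕ) + 1 = n := by omega
      rw [hn', Matrix.mul_apply]
      have : ∀ k : Fin n, M i k * C k j = a k * ((β ^ (k : ℕ)) *ᵥ vt) i := by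
        intro k
        rw [hC, hM]
        simp only [Matrix.of_apply, if_pos hj]
        ring
      rw [Finset.sum_congr rfl fun k _ => this k, hCH]
      simp only [Matrix.mulVec, dotProduct, Matrix.sum_apply, Matrix.smul_apply,
        smul_eq_mul, Finset.sum_mul, Finset.mul_sum, mul_assoc]
      rw [Finset.sum_comm]
    · have hlt : (j : ℕ) + 1 < n := by omega
      rw [Matrix.mul_apply, Finset.sum_eq_single (⟨(j : ℕ) + 1, hlt⟩ : Fin n)]
      · rw [hC, hM]
        simp only [Matrix.of_apply, if_neg hj]
        simp
      · intro b _ hb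
        rw [hC]
        simp only [Matrix.of_apply, if_neg hj]
        rw [if_neg, mul_zero]
        intro hE
        exact hb (Fin.ext hE)
      · intro hmem; exact absurd (Finset.mem_univ _) hmem
  -- conclude
  clear_value M C
  obtain ⟨u, hu⟩ := hMunit
  refine ⟨u⁻¹, ?_⟩
  rw [inv_inv]
  show (↑u⁻¹ : Matrix (Fin n) (Fin n) OF) * β * (u : Matrix (Fin n) (Fin n) OF) = C
  calc (↑u⁻¹ : Matrix (Fin n) (Fin n) OF) * β * (u : Matrix (Fin n) (Fin n) OF)
      = (↑u⁻¹ : Matrix (Fin n) (Fin n) OF) * (β * M) := by rw [hu, mul_assoc]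
    _ = (↑u⁻¹ : Matrix (Fin n) (Fin n) OF) * (M * C) := by rw [hkey]
    _ = ((↑u⁻¹ : Matrix (Fin n) (Fin n) OF) * ↑u) * C := by rw [← hu, mul_assoc]
    _ = C := by rw [u.inv_mul, one_mul]
end

section
/- Let l ≥ 1 be an integer and let ε ∈ O_K^× satisfy N_{K/F}(ε) ≡ 1 (mod 𝔭_F^l). Then there exists ξ ∈ O_K^× with N_{K/F}(ξ) = 1 and ξ ≡ ε (mod 𝔭_K^{el}). -/
/-!
STATEMENT 10: Let `l ≥ 1` and let `ε ∈ O_K^×` satisfy `N_{K/F}(ε) ≡ 1 (mod 𝔭_F^l)`.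
Then there exists `ξ ∈ O_K^×` with `N_{K/F}(ξ) = 1` and `ξ ≡ ε (mod 𝔭_K^{el})`.

Context: `p` odd prime, `F/ℚ_p` finite with ring of integers `OF`, `K/F` finite of degree
`n > 1` with `p ∤ n` (tamely ramified), ring of integers `OK`, ramification index `e`.
-/

open IsLocalRing

section AuxGeneral

variable {R : Type*} [CommRing R]

lemma aux_mem_smul_top_iff (I : Ideal R) (x : R) :
    x ∈ (I • ⊤ : Submodule R R) ↔ x ∈ I := by
  rw [← Ideal.one_eq_top, Ideal.smul_eq_mul, mul_one]

lemma aux_isUnit_one_sub_of_mem [IsLocalRing R] {t : R} (ht : t ∈ maximalIdeal R) :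
    IsUnit (1 - t) := by
  by_contra h
  have h1 : (1 : R) - t ∈ maximalIdeal R := (IsLocalRing.mem_maximalIdeal _).mpr h
  have : (1 : R) ∈ maximalIdeal R := by
    have : (1 : R) = (1 - t) + t := by ring
    rw [this]; exact Submodule.add_mem _ h1 ht
  exact (Ideal.ne_top_iff_one _).mp (Ideal.IsMaximal.ne_top inferInstance) this

end AuxGeneral

section AuxOF

lemma aux_charZero_F {p : ℕ} [Fact (Nat.Prime p)]
    (F : Type*) [Field F] [Algebra ℚ_[p] F] : CharZero F :=
  charZero_of_injective_algebraMap (algebraMap ℚ_[p] F).injective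

lemma aux_p_mem_maximalIdeal {p : ℕ} [Fact (Nat.Prime p)]
    {F : Type*} [Field F] [Algebra ℚ_[p] F] [FiniteDimensional ℚ_[p] F]
    {OF : Type*} [CommRing OF] [IsDomain OF] [IsDiscreteValuationRing OF]
    [Algebra OF F] [IsFractionRing OF F]
    [Algebra ℤ_[p] OF] [Algebra ℤ_[p] F] [IsScalarTower ℤ_[p] ℚ_[p] F]
    [IsScalarTower ℤ_[p] OF F] [IsIntegralClosure OF ℤ_[p] F] : (p : OF) ∈ maximalIdeal OF := by
  haveI : CharZero F := aux_charZero_F (p := p) F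
  have hp0 : (p : F) ≠ 0 := Nat.cast_ne_zero.mpr (Fact.out : Nat.Prime p).ne_zero
  rw [IsLocalRing.mem_maximalIdeal, mem_nonunits_iff]
  intro h
  obtain ⟨u, hu⟩ := h
  have hinv : (p : OF) * ↑u⁻¹ = 1 := by rw [← hu]; exact u.mul_inv
  have hF : (p : F) * algebraMap OF F ↑u⁻¹ = 1 := by
    have := congrArg (algebraMap OF F) hinv
    rwa [map_mul, map_natCast, map_one] at this
  have hvint : IsIntegral ℤ_[p] (algebraMap OF F ↑u⁻¹) :=
    (IsIntegralClosure.isIntegral ℤ_[p] F (↑u⁻¹ : OF)).algebraMap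
  have hw : algebraMap OF F ↑u⁻¹ = algebraMap ℚ_[p] F ((p : ℚ_[p])⁻¹) := by
    apply mul_left_cancel₀ hp0
    rw [hF, ← map_natCast (algebraMap ℚ_[p] F), ← map_mul]
    rw [mul_inv_cancel₀ (by exact_mod_cast Nat.cast_ne_zero.mpr (Fact.out : Nat.Prime p).ne_zero), map_one]
  have hint : IsIntegral ℤ_[p] ((p : ℚ_[p])⁻¹) := by
    have hinj : Function.Injective (IsScalarTower.toAlgHom ℤ_[p] ℚ_[p] F) :=
      (algebraMap ℚ_[p] F).injective
    rw [← isIntegral_algHom_iff (IsScalarTower.toAlgHom ℤ_[p] ℚ_[p] F) hinj]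
    rw [hw] at hvint
    exact hvint
  obtain ⟨y, hy⟩ := IsIntegrallyClosed.isIntegral_iff.mp hint
  have hpy : (p : ℤ_[p]) * y = 1 := by
    apply IsFractionRing.injective ℤ_[p] ℚ_[p]
    rw [map_mul, map_one, hy, map_natCast]
    rw [mul_inv_cancel₀ (Nat.cast_ne_zero.mpr (Fact.out : Nat.Prime p).ne_zero)]
  exact PadicInt.p_nonunit (IsUnit.of_mul_eq_one _ hpy)

lemma aux_isAdicComplete {p : ℕ} [Fact (Nat.Prime p)]
    {F : Type*} [Field F] [Algebra ℚ_[p] F] [FiniteDimensional ℚ_[p] F]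
    {OF : Type*} [CommRing OF] [IsDomain OF] [IsDiscreteValuationRing OF]
    [Algebra OF F] [IsFractionRing OF F]
    [Algebra ℤ_[p] OF] [Algebra ℤ_[p] F] [IsScalarTower ℤ_[p] ℚ_[p] F]
    [IsScalarTower ℤ_[p] OF F] [IsIntegralClosure OF ℤ_[p] F] : IsAdicComplete (maximalIdeal OF) OF := by
  haveI : CharZero F := aux_charZero_F (p := p) F
  have hinj : Function.Injective (algebraMap ℤ_[p] F) := by
    rw [IsScalarTower.algebraMap_eq ℤ_[p] ℚ_[p] F]
    exact (algebraMap ℚ_[p] F).injective.comp (IsFractionRing.injective ℤ_[p] ℚ_[p])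
  haveI : FaithfulSMul ℤ_[p] F := (faithfulSMul_iff_algebraMap_injective _ _).mpr hinj
  haveI : Module.Free ℤ_[p] OF := IsIntegralClosure.module_free ℤ_[p] ℚ_[p] F OF
  haveI : IsNoetherian ℤ_[p] OF := IsIntegralClosure.isNoetherian ℤ_[p] ℚ_[p] F OF
  haveI : Module.Finite ℤ_[p] OF := Module.IsNoetherian.finite ℤ_[p] OF
  have hOFinj : Function.Injective (algebraMap OF F) := IsFractionRing.injective OF F
  have hp0 : (p : OF) ≠ 0 := by
    intro h
    have := congrArg (algebraMap OF F) h
    rw [map_natCast, map_zero] at this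
    exact Nat.cast_ne_zero.mpr (Fact.out : Nat.Prime p).ne_zero this
  have hpmem : (p : OF) ∈ maximalIdeal OF := aux_p_mem_maximalIdeal (F := F)
  obtain ⟨π, hπ⟩ := IsDiscreteValuationRing.exists_irreducible OF
  obtain ⟨m, u, hmu⟩ := IsDiscreteValuationRing.eq_unit_mul_pow_irreducible hp0 hπ
  have hspan : Ideal.span {(p : OF)} = maximalIdeal OF ^ m := by
    rw [hπ.maximalIdeal_eq, Ideal.span_singleton_pow, hmu,
      Ideal.span_singleton_eq_span_singleton]
    exact (Associated.symm ⟨u, mul_comm (π ^ m) ↑u⟩)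
  have hm1 : 1 ≤ m := by
    rcases Nat.eq_zero_or_pos m with h | h
    · exfalso
      rw [h, pow_zero, mul_one] at hmu
      exact (mem_nonunits_iff.mp ((IsLocalRing.mem_maximalIdeal _).mp hpmem)) (hmu ▸ u.isUnit)
    · exact h
  have hpow : ∀ k : ℕ, maximalIdeal OF ^ (m * k) = Ideal.span {(p : OF) ^ k} := by
    intro k
    rw [pow_mul, ← hspan, Ideal.span_singleton_pow]
  have hHaus : IsHausdorff (maximalIdeal OF) OF := by
    constructor
    intro x hx
    have hmem : x ∈ (⨅ k : ℕ, maximalIdeal OF ^ k) := by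
      rw [Ideal.mem_iInf]
      intro k
      have := hx k
      rw [SModEq.zero, aux_mem_smul_top_iff] at this
      exact this
    rw [Ideal.iInf_pow_eq_bot_of_isLocalRing _
      (Ideal.IsMaximal.ne_top inferInstance)] at hmem
    exact Ideal.mem_bot.mp hmem
  have hPrec : IsPrecomplete (maximalIdeal OF) OF := by
    constructor
    intro f hf
    set b := Module.Free.chooseBasis ℤ_[p] OF with hb
    have key : ∀ i, ∃ Li : ℤ_[p], ∀ k : ℕ,
        b.repr (f (m * k)) i ≡ Li [SMOD (maximalIdeal ℤ_[p] ^ k • ⊤ : Submodule ℤ_[p] ℤ_[p])] := by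
      intro i
      apply IsPrecomplete.prec inferInstance
      intro k k' hkk'
      rw [SModEq.sub_mem, aux_mem_smul_top_iff]
      have hdf : f (m * k) - f (m * k') ∈ Ideal.span {(p : OF) ^ k} := by
        rw [← hpow k]
        have := hf (Nat.mul_le_mul_left m hkk')
        rw [SModEq.sub_mem, aux_mem_smul_top_iff] at this
        exact this
      obtain ⟨w, hw⟩ := Ideal.mem_span_singleton'.mp hdf
      have hrw : f (m * k) - f (m * k') = ((p : ℤ_[p]) ^ k) • w := by
        rw [Algebra.smul_def, map_pow, map_natCast, ← hw, mul_comm]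
      have : b.repr (f (m * k)) i - b.repr (f (m * k')) i
          = (p : ℤ_[p]) ^ k * b.repr w i := by
        rw [← Finsupp.sub_apply, ← map_sub, hrw, map_smul, Finsupp.smul_apply, smul_eq_mul]
      rw [this, PadicInt.maximalIdeal_eq_span_p, Ideal.span_singleton_pow]
      exact Ideal.mem_span_singleton'.mpr ⟨b.repr w i, mul_comm _ _⟩
    choose L hL using key
    refine ⟨∑ i, L i • b i, ?_⟩
    intro k
    rw [SModEq.sub_mem, aux_mem_smul_top_iff]
    have h1 : f k - f (m * k) ∈ maximalIdeal OF ^ k := by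
      have := hf (Nat.le_mul_of_pos_left k hm1)
      rw [SModEq.sub_mem, aux_mem_smul_top_iff] at this
      exact this
    have h2 : f (m * k) - ∑ i, L i • b i ∈ maximalIdeal OF ^ k := by
      set x := f (m * k) - ∑ i, L i • b i with hx
      have hcoords : ∀ i, ∃ ci : ℤ_[p], b.repr x i = (p : ℤ_[p]) ^ k * ci := by
        intro i
        have := hL i k
        rw [SModEq.sub_mem, aux_mem_smul_top_iff, PadicInt.maximalIdeal_eq_span_p,
          Ideal.span_singleton_pow] at this
        obtain ⟨ci, hci⟩ := Ideal.mem_span_singleton'.mp this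
        have hrepr : b.repr x i = b.repr (f (m * k)) i - L i := by
          rw [hx, map_sub, Finsupp.sub_apply, Module.Basis.repr_sum_self]
        exact ⟨ci, by rw [hrepr, ← hci, mul_comm]⟩
      choose cc hcc using hcoords
      have hxeq : x = ∑ i, ((p : ℤ_[p]) ^ k * cc i) • b i := by
        conv_lhs => rw [← b.sum_repr x]
        exact Finset.sum_congr rfl fun i _ => by rw [hcc i]
      have hxmem : x ∈ Ideal.span {(p : OF) ^ k} := by
        rw [hxeq]
        apply Ideal.sum_mem
        intro i _
        have : ((p : ℤ_[p]) ^ k * cc i) • b i = (cc i • b i) * (p : OF) ^ k := by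
          rw [mul_comm, mul_smul, Algebra.smul_def (((p : ℤ_[p])) ^ k), map_pow, map_natCast,
            mul_comm]
          exact (smul_mul_assoc _ _ _).symm
        rw [this]
        exact Ideal.mul_mem_left _ _ (Ideal.subset_span rfl)
      have : Ideal.span {(p : OF) ^ k} ≤ maximalIdeal OF ^ k := by
        rw [← hpow k]
        exact Ideal.pow_le_pow_right (Nat.le_mul_of_pos_left k hm1)
      exact this hxmem
    have : f k - ∑ i, L i • b i = (f k - f (m * k)) + (f (m * k) - ∑ i, L i • b i) := by ring
    rw [this]
    exact Submodule.add_mem _ h1 h2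
  exact { toIsHausdorff := hHaus, toIsPrecomplete := hPrec }

end AuxOF

theorem exists_norm_one_congruent_unit
    {p : ℕ} [Fact (Nat.Prime p)] (hp : p ≠ 2)
    {F : Type*} [Field F] [Algebra ℚ_[p] F] [FiniteDimensional ℚ_[p] F]
    {OF : Type*} [CommRing OF] [IsDomain OF] [IsDiscreteValuationRing OF]
    [Algebra OF F] [IsFractionRing OF F]
    [Algebra ℤ_[p] OF] [Algebra ℤ_[p] F] [IsScalarTower ℤ_[p] ℚ_[p] F]
    [IsScalarTower ℤ_[p] OF F] [IsIntegralClosure OF ℤ_[p] F]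
    {K : Type*} [Field K] [Algebra F K] [FiniteDimensional F K]
    {OK : Type*} [CommRing OK] [IsDomain OK] [IsDiscreteValuationRing OK]
    [Algebra OK K] [IsFractionRing OK K]
    [Algebra OF OK] [Algebra OF K] [IsScalarTower OF OK K] [IsScalarTower OF F K]
    [IsIntegralClosure OK OF K]
    (hn : 1 < Module.finrank F K) (hpn : ¬ p ∣ Module.finrank F K)
    (e : ℕ)
    (he : e = Ideal.ramificationIdx' (maximalIdeal OF) (maximalIdeal OK))
    (l : ℕ) (hl : 1 ≤ l)
    (ε : OK) (hε : IsUnit ε)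
    (hnorm : ∃ c : OF, algebraMap OF F c = Algebra.norm F (algebraMap OK K ε) ∧
      c - 1 ∈ maximalIdeal OF ^ l) :
    ∃ ξ : OK, IsUnit ξ ∧ Algebra.norm F (algebraMap OK K ξ) = 1 ∧
      ξ - ε ∈ maximalIdeal OK ^ (e * l) := by
  obtain ⟨c, hcnorm, hcmem⟩ := hnorm
  set n := Module.finrank F K with hn_def
  haveI : IsAdicComplete (maximalIdeal OF) OF := aux_isAdicComplete (p := p) (F := F)
  have hpmem : (p : OF) ∈ maximalIdeal OF := aux_p_mem_maximalIdeal (F := F)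
  -- `n` is a unit in `OF`
  have hnunit : IsUnit (n : OF) := by
    have hcop : IsCoprime (p : ℤ) (n : ℤ) := by
      refine Int.isCoprime_iff_gcd_eq_one.mpr ?_
      simpa [Int.gcd_natCast_natCast] using ((Nat.Prime.coprime_iff_not_dvd Fact.out).mpr hpn)
    obtain ⟨x, y, hxy⟩ := hcop
    have h1 : (x : OF) * (p : OF) + (y : OF) * (n : OF) = 1 := by
      have := congrArg (fun t : ℤ => (t : OF)) hxy
      push_cast at this
      exact this
    have hunit : IsUnit ((y : OF) * (n : OF)) := by
      have heq : (y : OF) * (n : OF) = 1 - (x : OF) * (p : OF) := by linear_combination h1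
      rw [heq]
      exact aux_isUnit_one_sub_of_mem (Ideal.mul_mem_left _ _ hpmem)
    exact isUnit_of_mul_isUnit_right hunit
  have hn0 : n ≠ 0 := by omega
  -- Hensel's lemma applied to `X^n - C c` with approximate root `1`
  have hmonic : (Polynomial.X ^ n - Polynomial.C c).Monic := Polynomial.monic_X_pow_sub_C c hn0
  have hc1mem : c - 1 ∈ maximalIdeal OF := Ideal.pow_le_self (by omega) hcmem
  have heval : (Polynomial.X ^ n - Polynomial.C c).eval 1 ∈ maximalIdeal OF := by
    have : (Polynomial.X ^ n - Polynomial.C c).eval 1 = -(c - 1) := by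
      simp [Polynomial.eval_sub, Polynomial.eval_pow]
    rw [this]
    exact (maximalIdeal OF).neg_mem hc1mem
  have hderiv : IsUnit (Ideal.Quotient.mk (maximalIdeal OF)
      ((Polynomial.X ^ n - Polynomial.C c).derivative.eval 1)) := by
    have : (Polynomial.X ^ n - Polynomial.C c).derivative.eval 1 = (n : OF) := by
      simp [Polynomial.derivative_sub, Polynomial.derivative_X_pow]
    rw [this]
    exact hnunit.map _
  obtain ⟨d, hdroot, hd1⟩ :=
    (inferInstance : HenselianRing OF (maximalIdeal OF)).is_henselian
      (Polynomial.X ^ n - Polynomial.C c) hmonic 1 heval hderiv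
  have hdn : d ^ n = c := by
    have := hdroot
    simp only [Polynomial.IsRoot, Polynomial.eval_sub, Polynomial.eval_pow, Polynomial.eval_X,
      Polynomial.eval_C, sub_eq_zero] at this
    exact this
  -- `d` is a unit
  have hdu : IsUnit d := by
    have : d = 1 - (1 - d) := by ring
    rw [this]
    apply aux_isUnit_one_sub_of_mem
    have : (1 : OF) - d = -(d - 1) := by ring
    rw [this]
    exact (maximalIdeal OF).neg_mem hd1
  -- the geometric sum is a unit
  have hS : IsUnit (∑ i ∈ Finset.range n, d ^ i) := by
    have hmem : (∑ i ∈ Finset.range n, d ^ i) - (n : OF) ∈ maximalIdeal OF := by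
      have hsum : (∑ i ∈ Finset.range n, d ^ i) - (n : OF)
          = ∑ i ∈ Finset.range n, (d ^ i - 1) := by
        rw [Finset.sum_sub_distrib]
        simp
      rw [hsum]
      apply Ideal.sum_mem
      intro i _
      obtain ⟨t, ht⟩ : (d - 1) ∣ (d ^ i - 1) := by
        simpa using sub_dvd_pow_sub_pow d 1 i
      rw [ht]
      exact Ideal.mul_mem_right _ _ hd1
    by_contra h
    have hS𝔭 : (∑ i ∈ Finset.range n, d ^ i) ∈ maximalIdeal OF :=
      (IsLocalRing.mem_maximalIdeal _).mpr h
    have hnm : (n : OF) ∈ maximalIdeal OF := by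
      have : (n : OF) = (∑ i ∈ Finset.range n, d ^ i)
          - ((∑ i ∈ Finset.range n, d ^ i) - (n : OF)) := by ring
      rw [this]
      exact Submodule.sub_mem _ hS𝔭 hmem
    exact (mem_nonunits_iff.mp ((IsLocalRing.mem_maximalIdeal _).mp hnm)) hnunit
  -- `d ≡ 1 mod 𝔭^l`
  have hdl : d - 1 ∈ maximalIdeal OF ^ l := by
    have key : (∑ i ∈ Finset.range n, d ^ i) * (d - 1) = c - 1 := by
      rw [geom_sum_mul, hdn]
    have heq : d - 1 = ↑hS.unit⁻¹ * (c - 1) := by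
      rw [← key, ← mul_assoc]
      rw [IsUnit.val_inv_mul hS, one_mul]
    rw [heq]
    exact Ideal.mul_mem_left _ _ hcmem
  -- construct ξ
  have hdOK : IsUnit (algebraMap OF OK d) := hdu.map _
  have hspec : (↑hdOK.unit : OK) = algebraMap OF OK d := IsUnit.unit_spec hdOK
  refine ⟨ε * ↑hdOK.unit⁻¹, hε.mul (hdOK.unit⁻¹).isUnit, ?_, ?_⟩
  · -- norm computation
    have hmul : (ε * ↑hdOK.unit⁻¹) * algebraMap OF OK d = ε := by
      rw [mul_assoc, IsUnit.val_inv_mul hdOK, mul_one]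
    have hKtower : algebraMap OK K (algebraMap OF OK d) = algebraMap F K (algebraMap OF F d) := by
      rw [← IsScalarTower.algebraMap_apply, IsScalarTower.algebraMap_apply OF F K]
    have hnormd : Algebra.norm F (algebraMap OK K (algebraMap OF OK d)) = algebraMap OF F c := by
      rw [hKtower, Algebra.norm_algebraMap, ← map_pow, hdn]
    have hc0 : algebraMap OF F c ≠ 0 := by
      rw [← hdn, map_pow]
      exact pow_ne_zero _ ((map_ne_zero_iff _ (IsFractionRing.injective OF F)).mpr hdu.ne_zero)
    have hNmul : (Algebra.norm F) ((algebraMap OK K) (ε * ↑hdOK.unit⁻¹))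
        * (Algebra.norm F) ((algebraMap OK K) (algebraMap OF OK d))
        = (Algebra.norm F) ((algebraMap OK K) ε) := by
      rw [← map_mul, ← map_mul, hmul]
    rw [hnormd, ← hcnorm] at hNmul
    exact mul_right_cancel₀ hc0 (hNmul.trans (one_mul _).symm)
  · -- congruence
    have hmem1d : (1 : OF) - d ∈ maximalIdeal OF ^ l := by
      have : (1 : OF) - d = -(d - 1) := by ring
      rw [this]
      exact (maximalIdeal OF ^ l).neg_mem hdl
    have himg : algebraMap OF OK ((1 : OF) - d) ∈ maximalIdeal OK ^ (e * l) := by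
      have h1 : algebraMap OF OK ((1 : OF) - d)
          ∈ Ideal.map (algebraMap OF OK) (maximalIdeal OF ^ l) :=
        Ideal.mem_map_of_mem _ hmem1d
      have h2 : Ideal.map (algebraMap OF OK) (maximalIdeal OF ^ l)
          ≤ maximalIdeal OK ^ (e * l) := by
        rw [Ideal.map_pow, pow_mul]
        exact Ideal.pow_right_mono (he ▸ Ideal.le_pow_ramificationIdx') l
      exact h2 h1
    have hmul : (ε * ↑hdOK.unit⁻¹) * algebraMap OF OK d = ε := by
      rw [mul_assoc, IsUnit.val_inv_mul hdOK, mul_one]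
    have hdiff : ε * ↑hdOK.unit⁻¹ - ε
        = (ε * ↑hdOK.unit⁻¹) * algebraMap OF OK ((1 : OF) - d) := by
      rw [map_sub, map_one, mul_sub, mul_one, hmul]
    rw [hdiff]
    exact Ideal.mul_mem_left _ _ himg
end

section
/- Let l ≥ 1 be an integer and let x ∈ O_K satisfy Tr_{K/F}(x) ≡ 0 (mod 𝔭_F^l). Then there exists z ∈ O_K with Tr_{K/F}(z) = 0 and z ≡ x (mod 𝔭_K^{el}). -/
/-!
STATEMENT 11: Let `l ≥ 1` and let `x ∈ O_K` satisfy `Tr_{K/F}(x) ≡ 0 (mod 𝔭_F^l)`.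
Then there exists `z ∈ O_K` with `Tr_{K/F}(z) = 0` and `z ≡ x (mod 𝔭_K^{el})`.

Context: `p` odd prime, `F/ℚ_p` finite with ring of integers `OF`, `K/F` finite of degree
`n > 1` with `p ∤ n` (tamely ramified), ring of integers `OK`, ramification index `e`.
-/

open IsLocalRing

theorem exists_trace_zero_congruent
    {p : ℕ} [Fact (Nat.Prime p)] (hp : p ≠ 2)
    {F : Type*} [Field F] [Algebra ℚ_[p] F] [FiniteDimensional ℚ_[p] F]
    {OF : Type*} [CommRing OF] [IsDomain OF] [IsDiscreteValuationRing OF]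
    [Algebra OF F] [IsFractionRing OF F]
    [Algebra ℤ_[p] OF] [Algebra ℤ_[p] F] [IsScalarTower ℤ_[p] ℚ_[p] F]
    [IsScalarTower ℤ_[p] OF F] [IsIntegralClosure OF ℤ_[p] F]
    {K : Type*} [Field K] [Algebra F K] [FiniteDimensional F K]
    {OK : Type*} [CommRing OK] [IsDomain OK] [IsDiscreteValuationRing OK]
    [Algebra OK K] [IsFractionRing OK K]
    [Algebra OF OK] [Algebra OF K] [IsScalarTower OF OK K] [IsScalarTower OF F K]
    [IsIntegralClosure OK OF K]
    (hn : 1 < Module.finrank F K) (hpn : ¬ p ∣ Module.finrank F K)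
    (e : ℕ)
    (he : e = Ideal.ramificationIdx' (maximalIdeal OF) (maximalIdeal OK))
    (l : ℕ) (hl : 1 ≤ l)
    (x : OK)
    (htr : ∃ c : OF, algebraMap OF F c = Algebra.trace F K (algebraMap OK K x) ∧
      c ∈ maximalIdeal OF ^ l) :
    ∃ z : OK, Algebra.trace F K (algebraMap OK K z) = 0 ∧
      z - x ∈ maximalIdeal OK ^ (e * l) := by
  obtain ⟨c, hc, hcl⟩ := htr
  set n := Module.finrank F K with hnn
  -- `(n : OF)` is a unit since `p ∤ n`
  have hunitZ : IsUnit ((n : ℤ_[p])) := by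
    rw [PadicInt.isUnit_iff]
    by_contra h
    have hlt : ‖((n : ℤ) : ℤ_[p])‖ < 1 :=
      lt_of_le_of_ne (by simpa using PadicInt.norm_le_one _) (by simpa using h)
    rw [PadicInt.norm_int_lt_one_iff_dvd] at hlt
    exact hpn (by exact_mod_cast hlt)
  have hunit : IsUnit ((n : OF)) := by
    have := hunitZ.map (algebraMap ℤ_[p] OF)
    rwa [map_natCast] at this
  set u := hunit.unit with hu
  set d : OF := ↑u⁻¹ * c with hd
  refine ⟨x - algebraMap OF OK d, ?_, ?_⟩
  · have h1 : algebraMap OK K (x - algebraMap OF OK d)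
        = algebraMap OK K x - algebraMap F K (algebraMap OF F d) := by
      rw [map_sub, ← IsScalarTower.algebraMap_apply OF OK K,
        IsScalarTower.algebraMap_apply OF F K]
    rw [h1, map_sub, ← hc, Algebra.trace_algebraMap]
    have h2 : Module.finrank F K • algebraMap OF F d = algebraMap OF F ((n : OF) * d) := by
      rw [nsmul_eq_mul, ← hnn, map_mul (algebraMap OF F) ((n : ℕ) : OF) d, map_natCast]
    rw [h2]
    have h3 : (n : OF) * d = c := by
      rw [hd, ← mul_assoc]
      have : (n : OF) * ↑u⁻¹ = 1 := by
        rw [← hunit.unit_spec, Units.mul_inv]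
      rw [this, one_mul]
    rw [h3, sub_self]
  · have hmem : algebraMap OF OK d ∈ maximalIdeal OK ^ (e * l) := by
      have hd_mem : d ∈ maximalIdeal OF ^ l := Ideal.mul_mem_left _ _ hcl
      have hmap : algebraMap OF OK d ∈
          (Ideal.map (algebraMap OF OK) (maximalIdeal OF)) ^ l := by
        rw [← Ideal.map_pow]
        exact Ideal.mem_map_of_mem _ hd_mem
      have hle : Ideal.map (algebraMap OF OK) (maximalIdeal OF) ≤ maximalIdeal OK ^ e := by
        rw [he]; exact Ideal.le_pow_ramificationIdx
      have := Ideal.pow_right_mono hle l hmap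
      rwa [← pow_mul] at this
    simpa using (maximalIdeal OK ^ (e * l)).neg_mem hmem
end
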